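/- In the infinite iterated crossed product algebra H_{(−∞,∞)} = ⋯ ⋊ H ⋊ H* ⋊ H ⋊ ⋯, for any integer p the subalgebras H_{(−∞,p]} and H_{[p+2,∞)} are mutual commutants: the centralizer of H_{(−∞,p]} in H_{(−∞,∞)} equals H_{[p+2,∞)} and vice versa. -/

import Mathlib

/- STATEMENT 12: In the (algebraic) two-sided infinite iterated crossed product
H_{(−∞,∞)} = ⋯ ⋊ H ⋊ H* ⋊ H ⋊ ⋯ (with H at odd positions and H* at even positions), for any
integer p the subalgebras H_{(−∞,p]} and H_{[p+2,∞)} are mutual commutants: the centralizer of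
H_{(−∞,p]} equals H_{[p+2,∞)} and vice versa.  The infinite iterated crossed product is presented
abstractly: an algebra B with alternating factor embeddings indexed by ℤ satisfying the
crossed-product relations, generating B, each finite interval spanning a subalgebra of the
correct dimension. -/

open scoped TensorProduct

noncomputable section

variable {H : Type*} [Ring H] [HopfAlgebra ℂ H]

/-- Convolution product on the dual of `H`, as a linear map on the tensor square. -/
def dmulT : Module.Dual ℂ H ⊗[ℂ] Module.Dual ℂ H →ₗ[ℂ] Module.Dual ℂ H :=
  (Coalgebra.comul (R := ℂ) (A := H)).dualMap ∘ₗ TensorProduct.dualDistrib ℂ H H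

/-- Comultiplication on the dual of `H` (dual to the multiplication of `H`). -/
def dComul [FiniteDimensional ℂ H] :
    Module.Dual ℂ H →ₗ[ℂ] Module.Dual ℂ H ⊗[ℂ] Module.Dual ℂ H :=
  (TensorProduct.dualDistribEquiv ℂ H H).symm.toLinearMap ∘ₗ (LinearMap.mul' ℂ H).dualMap

/-- The natural action of the dual on `H` : `f · x = f(x₂) x₁`, as a linear map on the
tensor product. -/
def aKH : Module.Dual ℂ H ⊗[ℂ] H →ₗ[ℂ] H :=
  (TensorProduct.lid ℂ H).toLinearMap
    ∘ₗ TensorProduct.map (contractLeft ℂ H) LinearMap.id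
    ∘ₗ (TensorProduct.assoc ℂ (Module.Dual ℂ H) H H).symm.toLinearMap
    ∘ₗ TensorProduct.map LinearMap.id
        ((TensorProduct.comm ℂ H H).toLinearMap ∘ₗ Coalgebra.comul (R := ℂ))

/-- The natural action of `H` on its dual : `x · f = f₁ f₂(x)`, as a linear map on the
tensor product. -/
def aHK [FiniteDimensional ℂ H] : H ⊗[ℂ] Module.Dual ℂ H →ₗ[ℂ] Module.Dual ℂ H :=
  (TensorProduct.rid ℂ (Module.Dual ℂ H)).toLinearMap
    ∘ₗ TensorProduct.map LinearMap.id (contractLeft ℂ H)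
    ∘ₗ (TensorProduct.assoc ℂ (Module.Dual ℂ H) (Module.Dual ℂ H) H).toLinearMap
    ∘ₗ TensorProduct.map dComul LinearMap.id
    ∘ₗ (TensorProduct.comm ℂ H (Module.Dual ℂ H)).toLinearMap

/-- Straightening map `x ⊗ f ↦ (x₁ · f) ⊗ x₂`. -/
def σHK [FiniteDimensional ℂ H] :
    H ⊗[ℂ] Module.Dual ℂ H →ₗ[ℂ] Module.Dual ℂ H ⊗[ℂ] H :=
  TensorProduct.map aHK LinearMap.id
    ∘ₗ (TensorProduct.assoc ℂ H (Module.Dual ℂ H) H).symm.toLinearMap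
    ∘ₗ TensorProduct.map LinearMap.id (TensorProduct.comm ℂ H (Module.Dual ℂ H)).toLinearMap
    ∘ₗ (TensorProduct.assoc ℂ H H (Module.Dual ℂ H)).toLinearMap
    ∘ₗ TensorProduct.map (Coalgebra.comul (R := ℂ)) LinearMap.id

/-- Straightening map `f ⊗ x ↦ (f₁ · x) ⊗ f₂`. -/
def σKH [FiniteDimensional ℂ H] :
    Module.Dual ℂ H ⊗[ℂ] H →ₗ[ℂ] H ⊗[ℂ] Module.Dual ℂ H :=
  TensorProduct.map aKH LinearMap.id
    ∘ₗ (TensorProduct.assoc ℂ (Module.Dual ℂ H) H (Module.Dual ℂ H)).symm.toLinearMap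
    ∘ₗ TensorProduct.map LinearMap.id (TensorProduct.comm ℂ (Module.Dual ℂ H) H).toLinearMap
    ∘ₗ (TensorProduct.assoc ℂ (Module.Dual ℂ H) (Module.Dual ℂ H) H).toLinearMap
    ∘ₗ TensorProduct.map dComul LinearMap.id

variable {B : Type*} [Ring B] [Algebra ℂ B]

/-- The subset of `B` corresponding to the `i`-th factor: a copy of `H` when `i + par` is odd
and a copy of `H*` when `i + par` is even. -/
def copyR (par : ℤ) (eH : ℤ → H →ₗ[ℂ] B) (eK : ℤ → Module.Dual ℂ H →ₗ[ℂ] B) (i : ℤ) : Set B :=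
  if (i + par) % 2 = 0 then Set.range (eK i) else Set.range (eH i)

/-- `B` is the iterated crossed product `H^lo ⋊ ⋯ ⋊ H^hi` (where `H^i = H` when `i + par` is odd
and `H^i = H*` when `i + par` is even), presented by its generators and relations: each factor
embeds as a unital subalgebra, distant factors commute, and consecutive factors satisfy the
crossed-product straightening relations coming from the natural actions `f·x = f(x₂)x₁` of `H*`
on `H` and `x·f = f₁ f₂(x)` of `H` on `H*`; moreover the factors generate `B`. -/
structure IsAltTower [FiniteDimensional ℂ H] (par : ℤ) (eH : ℤ → H →ₗ[ℂ] B)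
    (eK : ℤ → Module.Dual ℂ H →ₗ[ℂ] B) (lo hi : ℤ) : Prop where
  mulH : ∀ i, lo ≤ i → i ≤ hi → (i + par) % 2 = 1 → ∀ x y, eH i (x * y) = eH i x * eH i y
  oneH : ∀ i, lo ≤ i → i ≤ hi → (i + par) % 2 = 1 → eH i 1 = 1
  mulK : ∀ i, lo ≤ i → i ≤ hi → (i + par) % 2 = 0 →
    ∀ f g, eK i (dmulT (f ⊗ₜ g)) = eK i f * eK i g
  oneK : ∀ i, lo ≤ i → i ≤ hi → (i + par) % 2 = 0 →
    eK i (Coalgebra.counit (R := ℂ) (A := H)) = 1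
  commute : ∀ i j, lo ≤ i → j ≤ hi → i + 2 ≤ j →
    ∀ a ∈ copyR par eH eK i, ∀ b ∈ copyR par eH eK j, a * b = b * a
  strK : ∀ i, lo ≤ i → i + 1 ≤ hi → (i + par) % 2 = 0 →
    LinearMap.mul' ℂ B ∘ₗ TensorProduct.map (eH (i+1)) (eK i)
      = LinearMap.mul' ℂ B ∘ₗ TensorProduct.map (eK i) (eH (i+1)) ∘ₗ σHK
  strH : ∀ i, lo ≤ i → i + 1 ≤ hi → (i + par) % 2 = 1 →
    LinearMap.mul' ℂ B ∘ₗ TensorProduct.map (eK (i+1)) (eH i)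
      = LinearMap.mul' ℂ B ∘ₗ TensorProduct.map (eH i) (eK (i+1)) ∘ₗ σKH
  gen : Algebra.adjoin ℂ (⋃ i ∈ Set.Icc lo hi, copyR par eH eK i) = ⊤

/-- `B` is the two-sided infinite iterated crossed product `⋯ ⋊ H^{-1} ⋊ H^0 ⋊ H^1 ⋊ ⋯`,
presented by generators and relations (all conditions of `IsAltTower`, for every index). -/
structure IsAltTowerZ [FiniteDimensional ℂ H] (par : ℤ) (eH : ℤ → H →ₗ[ℂ] B)
    (eK : ℤ → Module.Dual ℂ H →ₗ[ℂ] B) : Prop where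
  mulH : ∀ i, (i + par) % 2 = 1 → ∀ x y, eH i (x * y) = eH i x * eH i y
  oneH : ∀ i, (i + par) % 2 = 1 → eH i 1 = 1
  mulK : ∀ i, (i + par) % 2 = 0 → ∀ f g, eK i (dmulT (f ⊗ₜ g)) = eK i f * eK i g
  oneK : ∀ i, (i + par) % 2 = 0 → eK i (Coalgebra.counit (R := ℂ) (A := H)) = 1
  commute : ∀ i j, i + 2 ≤ j →
    ∀ a ∈ copyR par eH eK i, ∀ b ∈ copyR par eH eK j, a * b = b * a
  strK : ∀ i, (i + par) % 2 = 0 →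
    LinearMap.mul' ℂ B ∘ₗ TensorProduct.map (eH (i+1)) (eK i)
      = LinearMap.mul' ℂ B ∘ₗ TensorProduct.map (eK i) (eH (i+1)) ∘ₗ σHK
  strH : ∀ i, (i + par) % 2 = 1 →
    LinearMap.mul' ℂ B ∘ₗ TensorProduct.map (eK (i+1)) (eH i)
      = LinearMap.mul' ℂ B ∘ₗ TensorProduct.map (eH i) (eK (i+1)) ∘ₗ σKH
  gen : Algebra.adjoin ℂ (⋃ i : ℤ, copyR par eH eK i) = ⊤

namespace XP12

open TensorProduct LinearMap

section Generic

variable {R : Type*} [Field R]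
variable {B : Type*} [Ring B] [Algebra R B]
variable {X Y Z : Type*} [AddCommGroup X] [Module R X] [AddCommGroup Y] [Module R Y]
  [AddCommGroup Z] [Module R Z]

theorem range_mulMap (φ : X →ₗ[R] B) (ψ : Y →ₗ[R] B) :
    LinearMap.range (LinearMap.mul' R B ∘ₗ TensorProduct.map φ ψ)
      = LinearMap.range φ * LinearMap.range ψ := by
  apply le_antisymm
  · rintro _ ⟨t, rfl⟩
    induction t using TensorProduct.induction_on with
    | zero => simp only [map_zero]; exact zero_mem _
    | tmul x y =>
        simp only [LinearMap.coe_comp, Function.comp_apply, TensorProduct.map_tmul,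
          LinearMap.mul'_apply]
        exact Submodule.mul_mem_mul (LinearMap.mem_range_self φ x) (LinearMap.mem_range_self ψ y)
    | add a b ha hb => simp only [map_add]; exact add_mem ha hb
  · rw [Submodule.mul_le]
    rintro _ ⟨x, rfl⟩ _ ⟨y, rfl⟩
    exact ⟨x ⊗ₜ y, by simp⟩

theorem mulMap_injective (φ : X →ₗ[R] B) (ψ : Y →ₗ[R] B)
    [FiniteDimensional R X] [FiniteDimensional R Y]
    (h : Module.finrank R ↥(LinearMap.range φ * LinearMap.range ψ)
        = Module.finrank R X * Module.finrank R Y) :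
    Function.Injective (LinearMap.mul' R B ∘ₗ TensorProduct.map φ ψ) := by
  set f := LinearMap.mul' R B ∘ₗ TensorProduct.map φ ψ with hf
  have hr : Module.finrank R ↥(LinearMap.range f) = Module.finrank R (X ⊗[R] Y) := by
    rw [hf, range_mulMap, h, Module.finrank_tensorProduct]
  have hrn := LinearMap.finrank_range_add_finrank_ker f
  rw [hr] at hrn
  have hk : Module.finrank R ↥(LinearMap.ker f) = 0 := by omega
  rw [← LinearMap.ker_eq_bot]
  exact Submodule.finrank_eq_zero.mp hk

theorem expand_right {ι : Type*} [Fintype ι] (v : Module.Basis ι R Y) (t : X ⊗[R] Y) :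
    t = ∑ i, ((TensorProduct.rid R X) ((LinearMap.lTensor X (v.coord i)) t)) ⊗ₜ[R] v i := by
  induction t using TensorProduct.induction_on with
  | zero => simp
  | tmul x y =>
      simp only [LinearMap.lTensor_tmul, TensorProduct.rid_tmul]
      have h1 : ∀ i : ι, ((v.coord i y) • x) ⊗ₜ[R] v i = x ⊗ₜ[R] ((v.repr y i) • v i) := by
        intro i
        rw [TensorProduct.smul_tmul, Module.Basis.coord_apply]
      rw [Finset.sum_congr rfl (fun i _ => h1 i), ← TensorProduct.tmul_sum, Module.Basis.sum_repr]
  | add a b ha hb =>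
      simp only [map_add]
      conv_lhs => rw [ha, hb]
      rw [← Finset.sum_add_distrib]
      exact Finset.sum_congr rfl fun i _ => (TensorProduct.add_tmul _ _ _).symm

theorem expand_left {ι : Type*} [Fintype ι] (v : Module.Basis ι R Y) (t : Y ⊗[R] X) :
    t = ∑ i, v i ⊗ₜ[R] ((TensorProduct.lid R X) ((LinearMap.rTensor X (v.coord i)) t)) := by
  induction t using TensorProduct.induction_on with
  | zero => simp
  | tmul y x =>
      simp only [LinearMap.rTensor_tmul, TensorProduct.lid_tmul]
      have h1 : ∀ i : ι, (v i) ⊗ₜ[R] ((v.coord i y) • x) = ((v.repr y i) • v i) ⊗ₜ[R] x := by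
        intro i
        rw [← TensorProduct.smul_tmul, Module.Basis.coord_apply]
      rw [Finset.sum_congr rfl (fun i _ => h1 i), ← TensorProduct.sum_tmul, Module.Basis.sum_repr]
  | add a b ha hb =>
      simp only [map_add]
      conv_lhs => rw [ha, hb]
      rw [← Finset.sum_add_distrib]
      exact Finset.sum_congr rfl fun i _ => (TensorProduct.tmul_add _ _ _).symm

theorem coords_zero_right {ι : Type*} [Fintype ι] [DecidableEq ι] (v : Module.Basis ι R Y) (u : ι → X)
    (h : ∑ i, u i ⊗ₜ[R] v i = 0) : ∀ i, u i = 0 := by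
  intro j
  have h2 := congrArg (fun t => (TensorProduct.rid R X) ((LinearMap.lTensor X (v.coord j)) t)) h
  simp only [map_sum, map_zero, LinearMap.lTensor_tmul, TensorProduct.rid_tmul] at h2
  rw [Finset.sum_eq_single j] at h2
  · simpa using h2
  · intro i _ hij
    rw [Module.Basis.coord_apply, Module.Basis.repr_self, Finsupp.single_apply, if_neg hij, zero_smul]
  · intro hj; exact absurd (Finset.mem_univ j) hj

theorem coords_zero_left {ι : Type*} [Fintype ι] [DecidableEq ι] (v : Module.Basis ι R Y) (u : ι → X)
    (h : ∑ i, v i ⊗ₜ[R] u i = 0) : ∀ i, u i = 0 := by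
  intro j
  have h2 := congrArg (fun t => (TensorProduct.lid R X) ((LinearMap.rTensor X (v.coord j)) t)) h
  simp only [map_sum, map_zero, LinearMap.rTensor_tmul, TensorProduct.lid_tmul] at h2
  rw [Finset.sum_eq_single j] at h2
  · simpa using h2
  · intro i _ hij
    rw [Module.Basis.coord_apply, Module.Basis.repr_self, Finsupp.single_apply, if_neg hij, zero_smul]
  · intro hj; exact absurd (Finset.mem_univ j) hj

theorem separating_left [FiniteDimensional R Y] (t : Y ⊗[R] X)
    (h : ∀ g : Module.Dual R Y, (TensorProduct.lid R X) (LinearMap.rTensor X g t) = 0) :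
    t = 0 := by
  classical
  let b := Module.finBasis R Y
  rw [expand_left b t]
  refine Finset.sum_eq_zero fun i _ => ?_
  rw [h (b.coord i), TensorProduct.tmul_zero]

end Generic

end XP12
namespace XP12

section Hopf
set_option synthInstance.maxHeartbeats 1000000
set_option linter.unusedSectionVars false
set_option maxHeartbeats 1600000

open TensorProduct LinearMap

variable {H : Type*} [Ring H] [HopfAlgebra ℂ H] [FiniteDimensional ℂ H]

theorem dualDistrib_dComul (f : Module.Dual ℂ H) :
    TensorProduct.dualDistrib ℂ H H (dComul f) = f ∘ₗ LinearMap.mul' ℂ H := by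
  have h : ∀ t, TensorProduct.dualDistrib ℂ H H t = TensorProduct.dualDistribEquiv ℂ H H t :=
    fun t => rfl
  rw [dComul]
  simp only [LinearMap.coe_comp, Function.comp_apply, LinearEquiv.coe_coe]
  rw [h, LinearEquiv.apply_symm_apply]
  ext z
  simp

theorem dComul_pair (f : Module.Dual ℂ H) (x y : H) :
    TensorProduct.dualDistrib ℂ H H (dComul f) (x ⊗ₜ[ℂ] y) = f (x * y) := by
  rw [dualDistrib_dComul]
  simp

theorem aHK_apply (a : H) (f : Module.Dual ℂ H) (z : H) :
    aHK (a ⊗ₜ[ℂ] f) z = f (z * a) := by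
  have key : ∀ t : Module.Dual ℂ H ⊗[ℂ] Module.Dual ℂ H,
      ((TensorProduct.rid ℂ (Module.Dual ℂ H))
        ((TensorProduct.map LinearMap.id (contractLeft ℂ H))
          ((TensorProduct.assoc ℂ (Module.Dual ℂ H) (Module.Dual ℂ H) H) (t ⊗ₜ[ℂ] a)))) z
        = TensorProduct.dualDistrib ℂ H H t (z ⊗ₜ[ℂ] a) := by
    intro t
    induction t using TensorProduct.induction_on with
    | zero => simp
    | tmul g h =>
        simp [TensorProduct.assoc_tmul, TensorProduct.dualDistrib_apply, mul_comm]
    | add u v hu hv =>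
        simp only [TensorProduct.add_tmul, map_add, LinearMap.add_apply] at hu hv ⊢
        rw [hu, hv]
  have : aHK (a ⊗ₜ[ℂ] f)
      = (TensorProduct.rid ℂ (Module.Dual ℂ H))
        ((TensorProduct.map LinearMap.id (contractLeft ℂ H))
          ((TensorProduct.assoc ℂ (Module.Dual ℂ H) (Module.Dual ℂ H) H)
            ((dComul f) ⊗ₜ[ℂ] a))) := by
    simp [aHK]
  rw [this, key, dComul_pair]

theorem counit_aKH (f : Module.Dual ℂ H) (x : H) :
    Coalgebra.counit (R := ℂ) (aKH (f ⊗ₜ[ℂ] x)) = f x := by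
  have key : ∀ c : H ⊗[ℂ] H,
      Coalgebra.counit (R := ℂ)
        ((TensorProduct.lid ℂ H)
          ((TensorProduct.map (contractLeft ℂ H) LinearMap.id)
            ((TensorProduct.assoc ℂ (Module.Dual ℂ H) H H).symm (f ⊗ₜ[ℂ] c))))
        = TensorProduct.dualDistrib ℂ H H
            (f ⊗ₜ[ℂ] (Coalgebra.counit (R := ℂ) (A := H))) c := by
    intro c
    induction c using TensorProduct.induction_on with
    | zero => simp
    | tmul u v => simp [TensorProduct.assoc_symm_tmul, TensorProduct.dualDistrib_apply]
    | add u v hu hv =>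
        simp only [TensorProduct.tmul_add, map_add] at hu hv ⊢
        rw [hu, hv]
  have h1 : aKH (f ⊗ₜ[ℂ] x)
      = (TensorProduct.lid ℂ H)
          ((TensorProduct.map (contractLeft ℂ H) LinearMap.id)
            ((TensorProduct.assoc ℂ (Module.Dual ℂ H) H H).symm
              (f ⊗ₜ[ℂ] ((TensorProduct.comm ℂ H H) (Coalgebra.comul (R := ℂ) x))))) := by
    simp [aKH]
  rw [h1, key]
  have key2 : ∀ c : H ⊗[ℂ] H,
      TensorProduct.dualDistrib ℂ H H (f ⊗ₜ[ℂ] (Coalgebra.counit (R := ℂ) (A := H)))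
          ((TensorProduct.comm ℂ H H) c)
        = f ((TensorProduct.lid ℂ H)
            (LinearMap.rTensor H (Coalgebra.counit (R := ℂ) (A := H)) c)) := by
    intro c
    induction c using TensorProduct.induction_on with
    | zero => simp
    | tmul u v => simp [TensorProduct.dualDistrib_apply, mul_comm]
    | add u v hu hv => simp only [map_add, LinearMap.add_apply] at hu hv ⊢; rw [hu, hv]
  rw [key2, Coalgebra.rTensor_counit_comul]
  simp

end Hopf

end XP12
namespace XP12

section Hopf2

set_option synthInstance.maxHeartbeats 1000000
set_option maxHeartbeats 1600000
set_option linter.unusedSectionVars false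

open TensorProduct LinearMap

variable {H : Type*} [Ring H] [HopfAlgebra ℂ H] [FiniteDimensional ℂ H]

/-- `ξHK (c ⊗ f) = (a₁ · f) ⊗ a₂` for `c = a₁ ⊗ a₂`. -/
noncomputable def ξHK : (H ⊗[ℂ] H) ⊗[ℂ] Module.Dual ℂ H →ₗ[ℂ] Module.Dual ℂ H ⊗[ℂ] H :=
  TensorProduct.map aHK LinearMap.id
    ∘ₗ (TensorProduct.assoc ℂ H (Module.Dual ℂ H) H).symm.toLinearMap
    ∘ₗ TensorProduct.map LinearMap.id (TensorProduct.comm ℂ H (Module.Dual ℂ H)).toLinearMap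
    ∘ₗ (TensorProduct.assoc ℂ H H (Module.Dual ℂ H)).toLinearMap

theorem σHK_eq (x : H) (f : Module.Dual ℂ H) :
    σHK (x ⊗ₜ[ℂ] f) = ξHK ((Coalgebra.comul (R := ℂ) x) ⊗ₜ[ℂ] f) := by
  simp [σHK, ξHK]

theorem ξHK_tmul (a b : H) (f : Module.Dual ℂ H) :
    ξHK ((a ⊗ₜ[ℂ] b) ⊗ₜ[ℂ] f) = (aHK (a ⊗ₜ[ℂ] f)) ⊗ₜ[ℂ] b := by
  simp [ξHK, TensorProduct.assoc_tmul, TensorProduct.assoc_symm_tmul]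

/-- `ξKH (c ⊗ x) = (f₁ · x) ⊗ f₂` for `c = f₁ ⊗ f₂`. -/
noncomputable def ξKH :
    (Module.Dual ℂ H ⊗[ℂ] Module.Dual ℂ H) ⊗[ℂ] H →ₗ[ℂ] H ⊗[ℂ] Module.Dual ℂ H :=
  TensorProduct.map aKH LinearMap.id
    ∘ₗ (TensorProduct.assoc ℂ (Module.Dual ℂ H) H (Module.Dual ℂ H)).symm.toLinearMap
    ∘ₗ TensorProduct.map LinearMap.id (TensorProduct.comm ℂ (Module.Dual ℂ H) H).toLinearMap
    ∘ₗ (TensorProduct.assoc ℂ (Module.Dual ℂ H) (Module.Dual ℂ H) H).toLinearMap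

theorem σKH_eq (f : Module.Dual ℂ H) (x : H) :
    σKH (f ⊗ₜ[ℂ] x) = ξKH ((dComul f) ⊗ₜ[ℂ] x) := by
  simp [σKH, ξKH]

theorem ξKH_tmul (g h : Module.Dual ℂ H) (x : H) :
    ξKH ((g ⊗ₜ[ℂ] h) ⊗ₜ[ℂ] x) = (aKH (g ⊗ₜ[ℂ] x)) ⊗ₜ[ℂ] h := by
  simp [ξKH, TensorProduct.assoc_tmul, TensorProduct.assoc_symm_tmul]

/-- `aKH (f ⊗ x)` in terms of the swapped comultiplication. -/
theorem aKH_eq (f : Module.Dual ℂ H) (x : H) :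
    aKH (f ⊗ₜ[ℂ] x)
      = (TensorProduct.lid ℂ H)
          (LinearMap.rTensor H f ((TensorProduct.comm ℂ H H) (Coalgebra.comul (R := ℂ) x))) := by
  have key : ∀ c : H ⊗[ℂ] H,
      (TensorProduct.lid ℂ H)
          ((TensorProduct.map (contractLeft ℂ H) LinearMap.id)
            ((TensorProduct.assoc ℂ (Module.Dual ℂ H) H H).symm (f ⊗ₜ[ℂ] c)))
        = (TensorProduct.lid ℂ H) (LinearMap.rTensor H f c) := by
    intro c
    induction c using TensorProduct.induction_on with
    | zero => simp
    | tmul u v => simp [TensorProduct.assoc_symm_tmul]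
    | add u v hu hv =>
        simp only [TensorProduct.tmul_add, map_add] at hu hv ⊢
        rw [hu, hv]
  have h1 : aKH (f ⊗ₜ[ℂ] x)
      = (TensorProduct.lid ℂ H)
          ((TensorProduct.map (contractLeft ℂ H) LinearMap.id)
            ((TensorProduct.assoc ℂ (Module.Dual ℂ H) H H).symm
              (f ⊗ₜ[ℂ] ((TensorProduct.comm ℂ H H) (Coalgebra.comul (R := ℂ) x))))) := by
    simp [aKH]
  rw [h1, key]

/-- evaluation of the second leg of `dComul` at `1`. -/
theorem dComul_eval_one (f : Module.Dual ℂ H) :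
    (TensorProduct.rid ℂ (Module.Dual ℂ H))
        (LinearMap.lTensor (Module.Dual ℂ H) (Module.Dual.eval ℂ H 1) (dComul f)) = f := by
  have key : ∀ (t : Module.Dual ℂ H ⊗[ℂ] Module.Dual ℂ H) (z : H),
      ((TensorProduct.rid ℂ (Module.Dual ℂ H))
          (LinearMap.lTensor (Module.Dual ℂ H) (Module.Dual.eval ℂ H 1) t)) z
        = TensorProduct.dualDistrib ℂ H H t (z ⊗ₜ[ℂ] 1) := by
    intro t z
    induction t using TensorProduct.induction_on with
    | zero => simp
    | tmul g h => simp [TensorProduct.dualDistrib_apply, mul_comm]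
    | add u v hu hv => simp only [map_add, LinearMap.add_apply] at hu hv ⊢; rw [hu, hv]
  ext z
  rw [key, dComul_pair, mul_one]

end Hopf2

end XP12
namespace XP12

section Hopf3

set_option synthInstance.maxHeartbeats 1000000
set_option maxHeartbeats 1600000
set_option linter.unusedSectionVars false

open TensorProduct LinearMap

variable {H : Type*} [Ring H] [HopfAlgebra ℂ H] [FiniteDimensional ℂ H]

theorem TA (f : Module.Dual ℂ H) (c : H ⊗[ℂ] H) :
    (TensorProduct.lid ℂ H)
        (LinearMap.rTensor H (Module.Dual.eval ℂ H 1) (ξHK (c ⊗ₜ[ℂ] f)))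
      = (TensorProduct.lid ℂ H) (LinearMap.rTensor H f c) := by
  induction c using TensorProduct.induction_on with
  | zero => simp
  | tmul a b => rw [ξHK_tmul]; simp [aHK_apply]
  | add u v hu hv =>
      simp only [TensorProduct.add_tmul, map_add] at hu hv ⊢
      rw [hu, hv]

theorem TB (x : H) (c : Module.Dual ℂ H ⊗[ℂ] Module.Dual ℂ H) :
    (TensorProduct.rid ℂ H)
        (LinearMap.lTensor H (Module.Dual.eval ℂ H 1) (ξKH (c ⊗ₜ[ℂ] x)))
      = aKH (((TensorProduct.rid ℂ (Module.Dual ℂ H))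
          (LinearMap.lTensor (Module.Dual ℂ H) (Module.Dual.eval ℂ H 1) c)) ⊗ₜ[ℂ] x) := by
  induction c using TensorProduct.induction_on with
  | zero => simp
  | tmul g h =>
      rw [ξKH_tmul]
      simp only [LinearMap.lTensor_tmul, TensorProduct.rid_tmul, Module.Dual.eval_apply]
      rw [← TensorProduct.smul_tmul', map_smul]
  | add u v hu hv =>
      simp only [TensorProduct.add_tmul, map_add] at hu hv ⊢
      rw [hu, hv, ← map_add, ← TensorProduct.add_tmul]

theorem TC (y : H) (c : Module.Dual ℂ H ⊗[ℂ] Module.Dual ℂ H) :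
    (TensorProduct.lid ℂ (Module.Dual ℂ H))
        (LinearMap.rTensor (Module.Dual ℂ H) (Coalgebra.counit (R := ℂ) (A := H))
          (ξKH (c ⊗ₜ[ℂ] y)))
      = (TensorProduct.lid ℂ (Module.Dual ℂ H))
          (LinearMap.rTensor (Module.Dual ℂ H) (Module.Dual.eval ℂ H y) c) := by
  induction c using TensorProduct.induction_on with
  | zero => simp
  | tmul g h =>
      rw [ξKH_tmul]
      simp only [LinearMap.rTensor_tmul, TensorProduct.lid_tmul, Module.Dual.eval_apply]
      rw [counit_aKH]
  | add u v hu hv =>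
      simp only [TensorProduct.add_tmul, map_add] at hu hv ⊢
      rw [hu, hv]

theorem TD (f : Module.Dual ℂ H) (c : H ⊗[ℂ] H) :
    (TensorProduct.rid ℂ (Module.Dual ℂ H))
        (LinearMap.lTensor (Module.Dual ℂ H) (Coalgebra.counit (R := ℂ) (A := H))
          (ξHK (c ⊗ₜ[ℂ] f)))
      = aHK (((TensorProduct.rid ℂ H)
          (LinearMap.lTensor H (Coalgebra.counit (R := ℂ) (A := H)) c)) ⊗ₜ[ℂ] f) := by
  induction c using TensorProduct.induction_on with
  | zero => simp
  | tmul a b =>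
      rw [ξHK_tmul]
      simp only [LinearMap.lTensor_tmul, TensorProduct.rid_tmul]
      rw [← TensorProduct.smul_tmul', map_smul]
  | add u v hu hv =>
      simp only [TensorProduct.add_tmul, map_add] at hu hv ⊢
      rw [hu, hv, ← map_add, ← TensorProduct.add_tmul]

/-- If `σHK (x ⊗ f) = f ⊗ x` for every `f`, then `x` is a scalar multiple of `1`. -/
theorem scalar_of_σHK_fix (x : H)
    (h : ∀ f : Module.Dual ℂ H, σHK (x ⊗ₜ[ℂ] f) = f ⊗ₜ[ℂ] x) :
    x = Coalgebra.counit (R := ℂ) x • 1 := by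
  have hΔ : Coalgebra.comul (R := ℂ) x = (1 : H) ⊗ₜ[ℂ] x := by
    rw [← sub_eq_zero]
    apply separating_left
    intro g
    have h1 := congrArg
      (fun t => (TensorProduct.lid ℂ H) (LinearMap.rTensor H (Module.Dual.eval ℂ H 1) t)) (h g)
    rw [σHK_eq, TA] at h1
    simp only [LinearMap.rTensor_tmul, TensorProduct.lid_tmul, Module.Dual.eval_apply] at h1
    rw [map_sub, map_sub, h1]
    simp
  have h3 := Coalgebra.lTensor_counit_comul (R := ℂ) x
  rw [hΔ] at h3
  have h4 := congrArg (TensorProduct.rid ℂ H) h3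
  simpa using h4.symm

/-- If `σKH (f ⊗ x) = x ⊗ f` for every `f`, then `x` is a scalar multiple of `1`. -/
theorem scalar_of_σKH_fix' (x : H)
    (h : ∀ f : Module.Dual ℂ H, σKH (f ⊗ₜ[ℂ] x) = x ⊗ₜ[ℂ] f) :
    x = Coalgebra.counit (R := ℂ) x • 1 := by
  have ha : ∀ f : Module.Dual ℂ H, aKH (f ⊗ₜ[ℂ] x) = f 1 • x := by
    intro f
    have h1 := congrArg
      (fun t => (TensorProduct.rid ℂ H) (LinearMap.lTensor H (Module.Dual.eval ℂ H 1) t)) (h f)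
    rw [σKH_eq, TB, dComul_eval_one] at h1
    simpa using h1
  have hc : (TensorProduct.comm ℂ H H) (Coalgebra.comul (R := ℂ) x) = (1 : H) ⊗ₜ[ℂ] x := by
    rw [← sub_eq_zero]
    apply separating_left
    intro g
    rw [map_sub, map_sub, ← aKH_eq, ha]
    simp
  have hΔ : Coalgebra.comul (R := ℂ) x = x ⊗ₜ[ℂ] (1 : H) := by
    have := congrArg (TensorProduct.comm ℂ H H).symm hc
    rwa [LinearEquiv.symm_apply_apply, TensorProduct.comm_symm_tmul] at this
  have h3 := Coalgebra.rTensor_counit_comul (R := ℂ) x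
  rw [hΔ] at h3
  have h4 := congrArg (TensorProduct.lid ℂ H) h3
  simpa using h4.symm

/-- If `σKH (f ⊗ y) = y ⊗ f` for every `y`, then `f` is a scalar multiple of the counit. -/
theorem scalar_of_σKH_fix (f : Module.Dual ℂ H)
    (h : ∀ y : H, σKH (f ⊗ₜ[ℂ] y) = y ⊗ₜ[ℂ] f) :
    f = f 1 • (Coalgebra.counit (R := ℂ) (A := H)) := by
  have hd : dComul f = (Coalgebra.counit (R := ℂ) (A := H)) ⊗ₜ[ℂ] f := by
    rw [← sub_eq_zero]
    apply separating_left
    intro g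
    obtain ⟨y, hy⟩ := (Module.evalEquiv ℂ H).surjective g
    rw [← hy, Module.evalEquiv_apply]
    have h1 := congrArg
      (fun t => (TensorProduct.lid ℂ (Module.Dual ℂ H))
        (LinearMap.rTensor (Module.Dual ℂ H) (Coalgebra.counit (R := ℂ) (A := H)) t)) (h y)
    rw [σKH_eq, TC] at h1
    simp only [LinearMap.rTensor_tmul, TensorProduct.lid_tmul] at h1
    rw [map_sub, map_sub, h1]
    simp [Module.Dual.eval_apply]
  have hpair : ∀ z : H, f z = Coalgebra.counit (R := ℂ) z * f 1 := by
    intro z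
    have := dComul_pair f z 1
    rw [hd] at this
    simp only [TensorProduct.dualDistrib_apply, mul_one] at this
    exact this.symm
  ext z
  rw [hpair z]
  simp [mul_comm]

/-- If `σHK (x ⊗ f) = f ⊗ x` for every `x`, then `f` is a scalar multiple of the counit. -/
theorem scalar_of_σHK_fix' (f : Module.Dual ℂ H)
    (h : ∀ x : H, σHK (x ⊗ₜ[ℂ] f) = f ⊗ₜ[ℂ] x) :
    f = f 1 • (Coalgebra.counit (R := ℂ) (A := H)) := by
  have ha : ∀ x : H, aHK (x ⊗ₜ[ℂ] f) = Coalgebra.counit (R := ℂ) x • f := by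
    intro x
    have h1 := congrArg
      (fun t => (TensorProduct.rid ℂ (Module.Dual ℂ H))
        (LinearMap.lTensor (Module.Dual ℂ H) (Coalgebra.counit (R := ℂ) (A := H)) t)) (h x)
    rw [σHK_eq, TD, Coalgebra.lTensor_counit_comul] at h1
    simpa using h1
  ext z
  have h2 := congrArg (fun g : Module.Dual ℂ H => g 1) (ha z)
  simp only [LinearMap.smul_apply, smul_eq_mul] at h2
  rw [aHK_apply, one_mul] at h2
  rw [h2]
  simp [mul_comm]
end Hopf3

end XP12
namespace XP12

section Tower

set_option synthInstance.maxHeartbeats 1000000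
set_option maxHeartbeats 1600000
set_option linter.unusedSectionVars false

open TensorProduct LinearMap

variable {H : Type*} [Ring H] [HopfAlgebra ℂ H] [FiniteDimensional ℂ H]
variable {B : Type*} [Ring B] [Algebra ℂ B]
variable (eH : ℤ → H →ₗ[ℂ] B) (eK : ℤ → Module.Dual ℂ H →ₗ[ℂ] B)

/-- The `i`-th factor as a submodule. -/
noncomputable def copyM (i : ℤ) : Submodule ℂ B :=
  if i % 2 = 0 then LinearMap.range (eK i) else LinearMap.range (eH i)

theorem copyM_coe (i : ℤ) : (copyM eH eK i : Set B) = copyR 0 eH eK i := by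
  unfold copyM copyR
  rw [add_zero]
  split <;> exact LinearMap.coe_range _

theorem copyM_even {i : ℤ} (h : i % 2 = 0) : copyM eH eK i = LinearMap.range (eK i) :=
  if_pos h

theorem copyM_odd {i : ℤ} (h : i % 2 = 1) : copyM eH eK i = LinearMap.range (eH i) :=
  if_neg (by omega)

theorem mem_copyR_of {i : ℤ} {a : B} (ha : a ∈ copyM eH eK i) : a ∈ copyR 0 eH eK i := by
  rw [← copyM_coe]; exact ha

variable (ht : IsAltTowerZ 0 eH eK)
include ht

theorem one_mem_copyM (i : ℤ) : (1 : B) ∈ copyM eH eK i := by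
  unfold copyM
  split_ifs with h
  · exact ⟨Coalgebra.counit, ht.oneK i (by omega)⟩
  · exact ⟨1, ht.oneH i (by omega)⟩

theorem mul_mem_copyM (i : ℤ) {a b : B} (ha : a ∈ copyM eH eK i) (hb : b ∈ copyM eH eK i) :
    a * b ∈ copyM eH eK i := by
  unfold copyM at ha hb ⊢
  split_ifs at ha hb ⊢ with h
  · obtain ⟨f, rfl⟩ := ha; obtain ⟨g, rfl⟩ := hb
    exact ⟨dmulT (f ⊗ₜ g), ht.mulK i (by omega) f g⟩
  · obtain ⟨x, rfl⟩ := ha; obtain ⟨y, rfl⟩ := hb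
    exact ⟨x * y, ht.mulH i (by omega) x y⟩

theorem commute_far {i j : ℤ} (hij : i + 2 ≤ j) {a b : B}
    (ha : a ∈ copyM eH eK i) (hb : b ∈ copyM eH eK j) : a * b = b * a :=
  ht.commute i j hij a (mem_copyR_of eH eK ha) b (mem_copyR_of eH eK hb)

theorem swap_le {i j : ℤ} (hij : i < j) :
    copyM eH eK j * copyM eH eK i ≤ copyM eH eK i * copyM eH eK j := by
  rcases lt_or_ge (i + 1) j with hfar | hnear
  · rw [Submodule.mul_le]
    intro a ha b hb
    rw [← commute_far eH eK ht (show i + 2 ≤ j by omega) hb ha]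
    exact Submodule.mul_mem_mul hb ha
  · have hj : j = i + 1 := by omega
    subst hj
    rw [Submodule.mul_le]
    intro a ha b hb
    rcases Int.emod_two_eq_zero_or_one i with hpar | hpar
    · rw [copyM_odd eH eK (show (i+1) % 2 = 1 by omega)] at ha
      rw [copyM_even eH eK hpar] at hb
      obtain ⟨x, rfl⟩ := ha; obtain ⟨f, rfl⟩ := hb
      have hs := LinearMap.congr_fun (ht.strK i (by omega)) (x ⊗ₜ[ℂ] f)
      simp only [LinearMap.coe_comp, Function.comp_apply, TensorProduct.map_tmul,
        LinearMap.mul'_apply] at hs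
      rw [hs]
      have hm : (LinearMap.mul' ℂ B) ((TensorProduct.map (eK i) (eH (i+1))) (σHK (x ⊗ₜ[ℂ] f)))
          ∈ LinearMap.range (eK i) * LinearMap.range (eH (i+1)) := by
        rw [← range_mulMap]; exact ⟨σHK (x ⊗ₜ[ℂ] f), rfl⟩
      rw [copyM_even eH eK hpar, copyM_odd eH eK (show (i+1) % 2 = 1 by omega)]
      exact hm
    · rw [copyM_even eH eK (show (i+1) % 2 = 0 by omega)] at ha
      rw [copyM_odd eH eK hpar] at hb
      obtain ⟨f, rfl⟩ := ha; obtain ⟨x, rfl⟩ := hb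
      have hs := LinearMap.congr_fun (ht.strH i (by omega)) (f ⊗ₜ[ℂ] x)
      simp only [LinearMap.coe_comp, Function.comp_apply, TensorProduct.map_tmul,
        LinearMap.mul'_apply] at hs
      rw [hs]
      have hm : (LinearMap.mul' ℂ B) ((TensorProduct.map (eH i) (eK (i+1))) (σKH (f ⊗ₜ[ℂ] x)))
          ∈ LinearMap.range (eH i) * LinearMap.range (eK (i+1)) := by
        rw [← range_mulMap]; exact ⟨σKH (f ⊗ₜ[ℂ] x), rfl⟩
      rw [copyM_odd eH eK hpar, copyM_even eH eK (show (i+1) % 2 = 0 by omega)]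
      exact hm

end Tower

section Tower2

set_option synthInstance.maxHeartbeats 1000000
set_option maxHeartbeats 1600000
set_option linter.unusedSectionVars false

open TensorProduct LinearMap

variable {H : Type*} [Ring H] [HopfAlgebra ℂ H] [FiniteDimensional ℂ H]
variable {B : Type*} [Ring B] [Algebra ℂ B]
variable (eH : ℤ → H →ₗ[ℂ] B) (eK : ℤ → Module.Dual ℂ H →ₗ[ℂ] B)

/-- Span of ordered products over `n` consecutive factors starting at `lo`. -/
noncomputable def Wn : ℤ → ℕ → Submodule ℂ B
  | _, 0 => 1
  | lo, n+1 => copyM eH eK lo * Wn (lo+1) n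

/-- Span of ordered products over the factors in `[lo, hi]`. -/
noncomputable def W (lo hi : ℤ) : Submodule ℂ B := Wn eH eK lo (hi + 1 - lo).toNat

theorem W_empty {lo hi : ℤ} (h : hi < lo) : W eH eK lo hi = 1 := by
  unfold W
  rw [show (hi + 1 - lo).toNat = 0 by omega]
  rfl

theorem W_cons {lo hi : ℤ} (h : lo ≤ hi) :
    W eH eK lo hi = copyM eH eK lo * W eH eK (lo+1) hi := by
  unfold W
  rw [show (hi + 1 - lo).toNat = (hi + 1 - (lo+1)).toNat + 1 by omega]
  rfl

theorem W_split (lo m hi : ℤ) (h1 : lo ≤ m) (h2 : m ≤ hi + 1) :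
    W eH eK lo hi = W eH eK lo (m-1) * W eH eK m hi := by
  have key : ∀ (n : ℕ) (lo : ℤ), (m - lo).toNat = n → lo ≤ m →
      W eH eK lo hi = W eH eK lo (m-1) * W eH eK m hi := by
    intro n
    induction n with
    | zero =>
        intro lo hn hlm
        have : lo = m := by omega
        subst this
        rw [W_empty eH eK (lo := lo) (hi := lo - 1) (by omega), Submodule.one_mul]
    | succ n ih =>
        intro lo hn hlm
        have hlo : lo ≤ hi := by omega
        rw [W_cons eH eK hlo, ih (lo+1) (by omega) (by omega), ← mul_assoc,
          ← W_cons eH eK (by omega)]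
  exact key _ lo rfl h1

theorem W_single (i : ℤ) : W eH eK i i = copyM eH eK i := by
  rw [W_cons eH eK le_rfl, W_empty eH eK (by omega), mul_one]

variable (ht : IsAltTowerZ 0 eH eK)
include ht

theorem one_le_Wn : ∀ (n : ℕ) (lo : ℤ), (1 : Submodule ℂ B) ≤ Wn eH eK lo n := by
  intro n
  induction n with
  | zero => intro lo; exact le_rfl
  | succ n ih =>
      intro lo
      rw [Submodule.one_le]
      have := Submodule.mul_mem_mul (one_mem_copyM eH eK ht lo)
        (Submodule.one_le.mp (ih (lo+1)))
      rwa [one_mul] at this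

theorem one_mem_W (lo hi : ℤ) : (1 : B) ∈ W eH eK lo hi :=
  Submodule.one_le.mp (one_le_Wn eH eK ht _ lo)

theorem W_le_pred (lo hi : ℤ) : W eH eK lo hi ≤ W eH eK (lo-1) hi := by
  rcases lt_or_ge hi (lo-1) with h | h
  · rw [W_empty eH eK (by omega), W_empty eH eK h]
  · intro x hx
    rw [W_cons eH eK h]
    have hx' : x ∈ W eH eK (lo - 1 + 1) hi := by
      rw [show lo - 1 + 1 = lo by omega]; exact hx
    have := Submodule.mul_mem_mul (one_mem_copyM eH eK ht (lo-1)) hx'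
    rwa [one_mul] at this

theorem W_mono_lo {lo' lo hi : ℤ} (h : lo' ≤ lo) : W eH eK lo hi ≤ W eH eK lo' hi := by
  have key : ∀ (n : ℕ) (lo' : ℤ), (lo - lo').toNat = n → lo' ≤ lo →
      W eH eK lo hi ≤ W eH eK lo' hi := by
    intro n
    induction n with
    | zero =>
        intro lo' hn hle
        have : lo' = lo := by omega
        subst this; exact le_rfl
    | succ n ih =>
        intro lo' hn hle
        refine le_trans (ih (lo'+1) (by omega) (by omega)) ?_
        have := W_le_pred eH eK ht (lo'+1) hi
        rwa [show lo' + 1 - 1 = lo' by omega] at this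
  exact key _ lo' rfl h

theorem W_mono_hi {lo hi hi' : ℤ} (h : hi ≤ hi') : W eH eK lo hi ≤ W eH eK lo hi' := by
  rcases lt_or_ge hi lo with h1 | h1
  · rw [W_empty eH eK h1, Submodule.one_le]
    exact one_mem_W eH eK ht lo hi'
  · rw [W_split eH eK lo (hi+1) hi' (by omega) (by omega),
      show hi + 1 - 1 = hi by omega]
    intro x hx
    have := Submodule.mul_mem_mul hx (one_mem_W eH eK ht (hi+1) hi')
    rwa [mul_one] at this

theorem copyM_le_W {lo i hi : ℤ} (h1 : lo ≤ i) (h2 : i ≤ hi) :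
    copyM eH eK i ≤ W eH eK lo hi := by
  have := (W_single eH eK i).symm.le
  exact le_trans this (le_trans (W_mono_lo eH eK ht h1) (W_mono_hi eH eK ht h2))

theorem copyM_mul_copyM_le (i : ℤ) :
    copyM eH eK i * copyM eH eK i ≤ copyM eH eK i :=
  Submodule.mul_le.mpr fun _ ha _ hb => mul_mem_copyM eH eK ht i ha hb

theorem copyM_mul_W_le {lo i hi : ℤ} (h1 : lo ≤ i) (h2 : i ≤ hi) :
    copyM eH eK i * W eH eK lo hi ≤ W eH eK lo hi := by
  have key : ∀ (n : ℕ) (lo : ℤ), (i - lo).toNat = n → lo ≤ i → i ≤ hi →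
      copyM eH eK i * W eH eK lo hi ≤ W eH eK lo hi := by
    intro n
    induction n with
    | zero =>
        intro lo hn hli hih
        have : i = lo := by omega
        subst this
        rw [W_cons eH eK hih, ← mul_assoc]
        exact mul_le_mul' (copyM_mul_copyM_le eH eK ht i) le_rfl
    | succ n ih =>
        intro lo hn hli hih
        have hlo : lo < i := by omega
        rw [W_cons eH eK (by omega), ← mul_assoc]
        refine le_trans (mul_le_mul' (swap_le eH eK ht hlo) le_rfl) ?_
        rw [mul_assoc]
        exact mul_le_mul' le_rfl (ih (lo+1) (by omega) (by omega) hih)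
  exact key _ lo rfl h1 h2

theorem W_mul_copyM_le {lo i hi : ℤ} (h1 : lo ≤ i) (h2 : i ≤ hi) :
    W eH eK lo hi * copyM eH eK i ≤ W eH eK lo hi := by
  have key : ∀ (n : ℕ) (hi : ℤ), (hi - i).toNat = n → lo ≤ i → i ≤ hi →
      W eH eK lo hi * copyM eH eK i ≤ W eH eK lo hi := by
    intro n
    induction n with
    | zero =>
        intro hi hn hli hih
        have : i = hi := by omega
        subst this
        rw [W_split eH eK lo i i hli (by omega), W_single eH eK i, mul_assoc]
        exact mul_le_mul' le_rfl (copyM_mul_copyM_le eH eK ht i)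
    | succ n ih =>
        intro hi hn hli hih
        have hhi : i < hi := by omega
        rw [W_split eH eK lo hi hi (by omega) (by omega), W_single eH eK hi, mul_assoc]
        refine le_trans (mul_le_mul' le_rfl (swap_le eH eK ht hhi)) ?_
        rw [← mul_assoc]
        exact mul_le_mul' (ih (hi-1) (by omega) hli (by omega)) le_rfl
  exact key _ hi rfl h1 h2

theorem W_mul_copyM_swap {lo i hi : ℤ} (h : i < lo) :
    W eH eK lo hi * copyM eH eK i ≤ copyM eH eK i * W eH eK lo hi := by
  have key : ∀ (n : ℕ) (hi : ℤ), (hi + 1 - lo).toNat = n →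
      W eH eK lo hi * copyM eH eK i ≤ copyM eH eK i * W eH eK lo hi := by
    intro n
    induction n with
    | zero =>
        intro hi hn
        have h1 : hi < lo := by omega
        rw [W_empty eH eK h1, Submodule.one_mul, Submodule.mul_one]
    | succ n ih =>
        intro hi hn
        have h1 : lo ≤ hi := by omega
        rw [W_split eH eK lo hi hi (by omega) (by omega), W_single eH eK hi, mul_assoc]
        refine le_trans (mul_le_mul' le_rfl (swap_le eH eK ht (by omega))) ?_
        rw [← mul_assoc]
        refine le_trans (mul_le_mul' (ih (hi-1) (by omega)) le_rfl) ?_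
        rw [mul_assoc]
  exact key _ hi rfl

theorem copyM_mul_W_le' {lo i hi : ℤ} (h2 : i ≤ hi) :
    copyM eH eK i * W eH eK lo hi ≤ W eH eK (min i lo) hi := by
  rcases le_or_gt lo i with h | h
  · rw [min_eq_right h]
    exact copyM_mul_W_le eH eK ht h h2
  · rw [min_eq_left h.le]
    refine le_trans (mul_le_mul' le_rfl
      (W_mono_lo eH eK ht (show i + 1 ≤ lo by omega))) ?_
    exact (W_cons eH eK h2).ge

theorem W_mul_copyM_le' {lo i hi : ℤ} (h2 : i ≤ hi) :
    W eH eK lo hi * copyM eH eK i ≤ W eH eK (min i lo) hi := by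
  rcases le_or_gt lo i with h | h
  · rw [min_eq_right h]
    exact W_mul_copyM_le eH eK ht h h2
  · rw [min_eq_left h.le]
    refine le_trans (W_mul_copyM_swap eH eK ht h) ?_
    refine le_trans (mul_le_mul' le_rfl
      (W_mono_lo eH eK ht (show i + 1 ≤ lo by omega))) ?_
    exact (W_cons eH eK h2).ge

theorem W_mul_W_le {lo hi j : ℤ} (hj : lo ≤ j) :
    W eH eK lo hi * W eH eK j hi ≤ W eH eK lo hi := by
  have key : ∀ (n : ℕ) (j : ℤ), (hi + 1 - j).toNat = n → lo ≤ j →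
      W eH eK lo hi * W eH eK j hi ≤ W eH eK lo hi := by
    intro n
    induction n with
    | zero =>
        intro j hn hj
        rw [W_empty eH eK (lo := j) (hi := hi) (by omega), mul_one]
    | succ n ih =>
        intro j hn hj
        have h1 : j ≤ hi := by omega
        rw [W_cons eH eK h1, ← mul_assoc]
        refine le_trans (mul_le_mul' (W_mul_copyM_le eH eK ht hj h1) le_rfl) ?_
        exact ih (j+1) (by omega) (by omega)
  exact key _ j rfl hj

theorem W_mul_W {lo hi lo' hi' m M : ℤ} (h1 : m ≤ lo) (h2 : m ≤ lo') (h3 : hi ≤ M)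
    (h4 : hi' ≤ M) : W eH eK lo hi * W eH eK lo' hi' ≤ W eH eK m M := by
  refine le_trans (mul_le_mul'
    (le_trans (W_mono_lo eH eK ht h1) (W_mono_hi eH eK ht h3))
    (le_trans (W_mono_lo eH eK ht h2) (W_mono_hi eH eK ht h4))) ?_
  exact W_mul_W_le eH eK ht le_rfl

end Tower2

end XP12
namespace XP12

section Tower3

set_option synthInstance.maxHeartbeats 1000000
set_option maxHeartbeats 1600000
set_option linter.unusedSectionVars false

open TensorProduct LinearMap

variable {H : Type*} [Ring H] [HopfAlgebra ℂ H] [FiniteDimensional ℂ H]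
variable {B : Type*} [Ring B] [Algebra ℂ B]
variable (eH : ℤ → H →ₗ[ℂ] B) (eK : ℤ → Module.Dual ℂ H →ₗ[ℂ] B)

theorem nontrivialH : Nontrivial H := by
  refine nontrivial_of_ne 1 0 fun h => ?_
  have h1 : Coalgebra.counit (R := ℂ) (1 : H) = 1 := Bialgebra.counit_one (R := ℂ) (A := H)
  rw [h, map_zero] at h1
  exact zero_ne_one h1

theorem finrank_H_pos : 0 < Module.finrank ℂ H := by
  have := nontrivialH (H := H)
  exact Module.finrank_pos

variable (ht : IsAltTowerZ 0 eH eK)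
include ht

theorem W_commute {lo hi : ℤ} {b : B} (hb : b ∈ W eH eK lo hi) {i : ℤ}
    (hcase : i + 2 ≤ lo ∨ hi + 2 ≤ i) {a : B} (ha : a ∈ copyM eH eK i) :
    a * b = b * a := by
  have key : ∀ (n : ℕ) (lo : ℤ), (i + 2 ≤ lo ∨ lo + n + 1 ≤ i) →
      ∀ b ∈ Wn eH eK lo n, a * b = b * a := by
    intro n
    induction n with
    | zero =>
        intro lo _ b hb
        obtain ⟨y, rfl⟩ := Submodule.mem_one.mp hb
        exact (Algebra.commutes y a).symm
    | succ n ih =>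
        intro lo hc b hb
        refine Submodule.mul_induction_on hb ?_ ?_
        · intro x hx m hm
          have hxa : a * x = x * a := by
            rcases hc with hc | hc
            · exact commute_far eH eK ht (show i + 2 ≤ lo by omega) ha hx
            · exact (commute_far eH eK ht (show lo + 2 ≤ i by omega) hx ha).symm
          have hma := ih (lo+1) (by omega) m hm
          rw [← mul_assoc, hxa, mul_assoc, hma, ← mul_assoc]
        · intro x y hx hy
          rw [mul_add, add_mul, hx, hy]
  rcases lt_or_ge hi lo with hord | hord
  · rw [W_empty eH eK hord] at hb
    obtain ⟨y, rfl⟩ := Submodule.mem_one.mp hb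
    exact (Algebra.commutes y a).symm
  · refine key ((hi + 1 - lo).toNat) lo ?_ b hb
    rcases hcase with hc | hc
    · exact Or.inl hc
    · right; omega

theorem W_le_adjoin_Icc {lo hi lo' hi' : ℤ} (h1 : lo ≤ lo') (h2 : hi' ≤ hi) :
    W eH eK lo' hi' ≤ Subalgebra.toSubmodule
      (Algebra.adjoin ℂ (⋃ i ∈ Set.Icc lo hi, copyR 0 eH eK i)) := by
  have key : ∀ (n : ℕ) (lo' : ℤ), lo ≤ lo' → lo' + n ≤ hi + 1 →
      Wn eH eK lo' n ≤ Subalgebra.toSubmodule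
        (Algebra.adjoin ℂ (⋃ i ∈ Set.Icc lo hi, copyR 0 eH eK i)) := by
    intro n
    induction n with
    | zero =>
        intro lo' _ _
        show (1 : Submodule ℂ B) ≤ _
        rw [Submodule.one_le, Subalgebra.mem_toSubmodule]
        exact Subalgebra.one_mem _
    | succ n ih =>
        intro lo' hl hr
        show copyM eH eK lo' * Wn eH eK (lo'+1) n ≤ _
        rw [Submodule.mul_le]
        intro x hx m hm
        rw [Subalgebra.mem_toSubmodule]
        have hx' : x ∈ Algebra.adjoin ℂ (⋃ i ∈ Set.Icc lo hi, copyR 0 eH eK i) := by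
          apply Algebra.subset_adjoin
          refine Set.mem_biUnion (show lo' ∈ Set.Icc lo hi by
            simp only [Set.mem_Icc]; omega) (mem_copyR_of eH eK hx)
        have hm' := ih (lo'+1) (by omega) (by omega) hm
        rw [Subalgebra.mem_toSubmodule] at hm'
        exact mul_mem hx' hm'
  rcases lt_or_ge hi' lo' with hord | hord
  · rw [W_empty eH eK hord, Submodule.one_le, Subalgebra.mem_toSubmodule]
    exact Subalgebra.one_mem _
  · exact key _ lo' h1 (by omega)

/-- The interval algebra as a subalgebra. -/
noncomputable def Wsub (lo hi : ℤ) : Subalgebra ℂ B :=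
  (W eH eK lo hi).toSubalgebra (one_mem_W eH eK ht lo hi)
    (fun x y hx hy => W_mul_W_le eH eK ht le_rfl (Submodule.mul_mem_mul hx hy))

theorem adjoin_Icc_eq_W {lo hi : ℤ} (h : lo ≤ hi) :
    Subalgebra.toSubmodule (Algebra.adjoin ℂ (⋃ i ∈ Set.Icc lo hi, copyR 0 eH eK i))
      = W eH eK lo hi := by
  apply le_antisymm
  · have hle : Algebra.adjoin ℂ (⋃ i ∈ Set.Icc lo hi, copyR 0 eH eK i) ≤ Wsub eH eK ht lo hi := by
      apply Algebra.adjoin_le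
      intro x hx
      obtain ⟨i, hi1, hx⟩ := Set.mem_iUnion₂.mp hx
      rw [Set.mem_Icc] at hi1
      have : x ∈ copyM eH eK i := by rw [← copyM_coe] at hx; exact hx
      exact copyM_le_W eH eK ht hi1.1 hi1.2 this
    intro x hx
    rw [Subalgebra.mem_toSubmodule] at hx
    exact hle hx
  · exact W_le_adjoin_Icc eH eK ht le_rfl le_rfl

theorem nontrivialB
    (hdim : ∀ lo hi : ℤ, lo ≤ hi →
      Module.finrank ℂ
          ↥(Algebra.adjoin ℂ (⋃ i ∈ Set.Icc lo hi, copyR 0 eH eK i))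
        = Module.finrank ℂ H ^ (hi + 1 - lo).toNat) :
    Nontrivial B := by
  by_contra hB
  rw [not_nontrivial_iff_subsingleton] at hB
  have h := hdim 0 0 le_rfl
  haveI : Subsingleton ↥(Algebra.adjoin ℂ (⋃ i ∈ Set.Icc (0:ℤ) 0, copyR 0 eH eK i)) :=
    ⟨fun a b => Subtype.ext (Subsingleton.elim _ _)⟩
  rw [Module.finrank_zero_of_subsingleton] at h
  rw [show ((0:ℤ) + 1 - 0).toNat = 1 by omega, pow_one] at h
  exact Nat.lt_irrefl 0 (h ▸ finrank_H_pos (H := H))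

theorem finrank_W
    (hdim : ∀ lo hi : ℤ, lo ≤ hi →
      Module.finrank ℂ
          ↥(Algebra.adjoin ℂ (⋃ i ∈ Set.Icc lo hi, copyR 0 eH eK i))
        = Module.finrank ℂ H ^ (hi + 1 - lo).toNat) (lo hi : ℤ) :
    Module.finrank ℂ ↥(W eH eK lo hi) = Module.finrank ℂ H ^ (hi + 1 - lo).toNat := by
  rcases le_or_gt lo hi with h | h
  · rw [← adjoin_Icc_eq_W eH eK ht h, Subalgebra.finrank_toSubmodule]
    exact hdim lo hi h
  · haveI := nontrivialB eH eK ht hdim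
    rw [W_empty eH eK h, show (hi + 1 - lo).toNat = 0 by omega, pow_zero]
    rw [Submodule.one_eq_span]
    exact finrank_span_singleton one_ne_zero

theorem fd_W
    (hdim : ∀ lo hi : ℤ, lo ≤ hi →
      Module.finrank ℂ
          ↥(Algebra.adjoin ℂ (⋃ i ∈ Set.Icc lo hi, copyR 0 eH eK i))
        = Module.finrank ℂ H ^ (hi + 1 - lo).toNat) (lo hi : ℤ) :
    FiniteDimensional ℂ ↥(W eH eK lo hi) := by
  refine FiniteDimensional.of_finrank_pos ?_
  rw [finrank_W eH eK ht hdim lo hi]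
  exact pow_pos (finrank_H_pos (H := H)) _

/-- Every element of `B` lies in some interval algebra spanning `[lo, hi] ⊇ [p, p+2]`. -/
theorem exists_W (p : ℤ) (b : B) :
    ∃ lo hi, lo ≤ p ∧ p + 2 ≤ hi ∧ b ∈ W eH eK lo hi := by
  let T : Subalgebra ℂ B :=
    { carrier := {b | ∃ lo hi, lo ≤ p ∧ p + 2 ≤ hi ∧ b ∈ W eH eK lo hi}
      mul_mem' := by
        rintro a b ⟨lo, hi, h1, h2, ha⟩ ⟨lo', hi', h1', h2', hb⟩
        exact ⟨min lo lo', max hi hi', by omega, by omega,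
          W_mul_W eH eK ht (min_le_left _ _) (min_le_right _ _) (le_max_left _ _)
            (le_max_right _ _) (Submodule.mul_mem_mul ha hb)⟩
      add_mem' := by
        rintro a b ⟨lo, hi, h1, h2, ha⟩ ⟨lo', hi', h1', h2', hb⟩
        refine ⟨min lo lo', max hi hi', by omega, by omega, ?_⟩
        have ha' := (le_trans (W_mono_lo eH eK ht (min_le_left lo lo'))
          (W_mono_hi eH eK ht (le_max_left hi hi'))) ha
        have hb' := (le_trans (W_mono_lo eH eK ht (min_le_right lo lo'))
          (W_mono_hi eH eK ht (le_max_right hi hi'))) hb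
        exact add_mem ha' hb'
      one_mem' := ⟨p, p + 2, le_rfl, le_rfl, one_mem_W eH eK ht p (p+2)⟩
      algebraMap_mem' := by
        intro r
        refine ⟨p, p + 2, le_rfl, le_rfl, ?_⟩
        rw [Algebra.algebraMap_eq_smul_one]
        exact Submodule.smul_mem _ r (one_mem_W eH eK ht p (p+2)) }
  have hT : (⊤ : Subalgebra ℂ B) ≤ T := by
    rw [← ht.gen]
    apply Algebra.adjoin_le
    intro x hx
    obtain ⟨i, hxi⟩ := Set.mem_iUnion.mp hx
    have : x ∈ copyM eH eK i := by rw [← copyM_coe] at hxi; exact hxi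
    exact ⟨min i p, max (p+2) i, min_le_right _ _, le_max_left _ _,
      copyM_le_W eH eK ht (min_le_left _ _) (le_max_right _ _) this⟩
  exact hT (show b ∈ (⊤ : Subalgebra ℂ B) from trivial)

end Tower3

end XP12
namespace XP12

section Core

set_option synthInstance.maxHeartbeats 1000000
set_option maxHeartbeats 1600000
set_option linter.unusedSectionVars false

open TensorProduct LinearMap

variable {B : Type*} [Ring B] [Algebra ℂ B]
variable {X X' : Type*} [AddCommGroup X] [Module ℂ X] [AddCommGroup X'] [Module ℂ X']

theorem gen_expand_right (φ : X →ₗ[ℂ] B) (V : Submodule ℂ B) {ι : Type*} [Fintype ι]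
    (v : Module.Basis ι ℂ ↥V) {b : B} (hb : b ∈ LinearMap.range φ * V) :
    ∃ u : ι → X, b = ∑ i, φ (u i) * (v i : B) := by
  have hb' : b ∈ LinearMap.range (LinearMap.mul' ℂ B ∘ₗ TensorProduct.map φ V.subtype) := by
    rw [range_mulMap, Submodule.range_subtype]; exact hb
  obtain ⟨t, ht⟩ := hb'
  refine ⟨fun i => (TensorProduct.rid ℂ X) ((LinearMap.lTensor X (v.coord i)) t), ?_⟩
  rw [← ht]
  conv_lhs => rw [expand_right v t]
  rw [map_sum]
  refine Finset.sum_congr rfl fun i _ => ?_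
  simp

theorem gen_unique_right (φ : X →ₗ[ℂ] B) (V : Submodule ℂ B) {ι : Type*} [Fintype ι]
    [DecidableEq ι] (v : Module.Basis ι ℂ ↥V)
    (hinj : Function.Injective (LinearMap.mul' ℂ B ∘ₗ TensorProduct.map φ V.subtype))
    (u : ι → X) (h : ∑ i, φ (u i) * (v i : B) = 0) : ∀ i, u i = 0 := by
  have h2 : (LinearMap.mul' ℂ B ∘ₗ TensorProduct.map φ V.subtype)
      (∑ i, u i ⊗ₜ[ℂ] v i) = 0 := by
    rw [map_sum]
    simpa using h
  have h3 : ∑ i, u i ⊗ₜ[ℂ] v i = 0 := hinj (by rw [h2, map_zero])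
  exact coords_zero_right v u h3

theorem gen_expand_left (ψ : X →ₗ[ℂ] B) (V : Submodule ℂ B) {ι : Type*} [Fintype ι]
    (v : Module.Basis ι ℂ ↥V) {b : B} (hb : b ∈ V * LinearMap.range ψ) :
    ∃ u : ι → X, b = ∑ i, (v i : B) * ψ (u i) := by
  have hb' : b ∈ LinearMap.range (LinearMap.mul' ℂ B ∘ₗ TensorProduct.map V.subtype ψ) := by
    rw [range_mulMap, Submodule.range_subtype]; exact hb
  obtain ⟨t, ht⟩ := hb'
  refine ⟨fun i => (TensorProduct.lid ℂ X) ((LinearMap.rTensor X (v.coord i)) t), ?_⟩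
  rw [← ht]
  conv_lhs => rw [expand_left v t]
  rw [map_sum]
  refine Finset.sum_congr rfl fun i _ => ?_
  simp

theorem gen_unique_left (ψ : X →ₗ[ℂ] B) (V : Submodule ℂ B) {ι : Type*} [Fintype ι]
    [DecidableEq ι] (v : Module.Basis ι ℂ ↥V)
    (hinj : Function.Injective (LinearMap.mul' ℂ B ∘ₗ TensorProduct.map V.subtype ψ))
    (u : ι → X) (h : ∑ i, (v i : B) * ψ (u i) = 0) : ∀ i, u i = 0 := by
  have h2 : (LinearMap.mul' ℂ B ∘ₗ TensorProduct.map V.subtype ψ)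
      (∑ i, v i ⊗ₜ[ℂ] u i) = 0 := by
    rw [map_sum]
    simpa using h
  have h3 : ∑ i, v i ⊗ₜ[ℂ] u i = 0 := hinj (by rw [h2, map_zero])
  exact coords_zero_left v u h3

/-- Abstract "peel off the bottom factor" core lemma. -/
theorem peel_core [FiniteDimensional ℂ X] [FiniteDimensional ℂ X']
    (e : X →ₗ[ℂ] B) (e' : X' →ₗ[ℂ] B) (σ : X ⊗[ℂ] X' →ₗ[ℂ] X' ⊗[ℂ] X)
    (V' : Submodule ℂ B) [FiniteDimensional ℂ ↥V']
    (hstr : ∀ (x : X) (f : X'),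
      e x * e' f = (LinearMap.mul' ℂ B ∘ₗ TensorProduct.map e' e) (σ (x ⊗ₜ[ℂ] f)))
    (hcomm : ∀ (f : X') (m : B), m ∈ V' → e' f * m = m * e' f)
    (hrk2 : Module.finrank ℂ ↥(LinearMap.range e' * LinearMap.range e * V')
      = Module.finrank ℂ X' * Module.finrank ℂ X * Module.finrank ℂ ↥V')
    (u : B) (hu : u ∈ LinearMap.range e * V')
    (hc : ∀ f : X', e' f * u = u * e' f) :
    ∃ (k : ℕ) (x : Fin k → X) (m : Fin k → ↥V'),
      (∀ i, ∀ f : X', σ (x i ⊗ₜ[ℂ] f) = f ⊗ₜ[ℂ] x i) ∧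
      u = ∑ i, e (x i) * (m i : B) := by
  classical
  let v := Module.finBasis ℂ ↥V'
  obtain ⟨x, hx⟩ := gen_expand_right e V' v hu
  refine ⟨_, x, fun i => v i, ?_, hx⟩
  -- injectivity of the double-block map θ
  have hθrange : LinearMap.range (LinearMap.mul' ℂ B ∘ₗ TensorProduct.map e' e)
      = LinearMap.range e' * LinearMap.range e := range_mulMap e' e
  have hθinj : Function.Injective (LinearMap.mul' ℂ B ∘ₗ
      TensorProduct.map (LinearMap.mul' ℂ B ∘ₗ TensorProduct.map e' e) V'.subtype) := by
    apply mulMap_injective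
    rw [hθrange, Submodule.range_subtype, Module.finrank_tensorProduct, hrk2, mul_assoc]
  intro i f
  -- compute e' f * u and u * e' f through θ
  set θ := LinearMap.mul' ℂ B ∘ₗ
      TensorProduct.map (LinearMap.mul' ℂ B ∘ₗ TensorProduct.map e' e) V'.subtype with hθ
  have hθtmul : ∀ (w : X' ⊗[ℂ] X) (mi : ↥V'),
      θ (w ⊗ₜ[ℂ] mi) = (LinearMap.mul' ℂ B ∘ₗ TensorProduct.map e' e) w * (mi : B) := by
    intro w mi
    simp [hθ]
  have eq1 : e' f * u = θ (∑ j, (f ⊗ₜ[ℂ] x j) ⊗ₜ[ℂ] v j) := by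
    rw [hx, Finset.mul_sum, map_sum]
    refine Finset.sum_congr rfl fun j _ => ?_
    rw [hθtmul]
    simp only [LinearMap.coe_comp, Function.comp_apply, TensorProduct.map_tmul,
      LinearMap.mul'_apply]
    rw [mul_assoc]
  have eq2 : u * e' f = θ (∑ j, (σ (x j ⊗ₜ[ℂ] f)) ⊗ₜ[ℂ] v j) := by
    rw [hx, Finset.sum_mul, map_sum]
    refine Finset.sum_congr rfl fun j _ => ?_
    rw [hθtmul, ← hstr]
    rw [mul_assoc, ← hcomm f (v j : B) (SetLike.coe_mem _), ← mul_assoc]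
  have heq : ∑ j, ((f ⊗ₜ[ℂ] x j) ⊗ₜ[ℂ] v j : (X' ⊗[ℂ] X) ⊗[ℂ] ↥V')
      = ∑ j, (σ (x j ⊗ₜ[ℂ] f)) ⊗ₜ[ℂ] v j := by
    apply hθinj
    rw [← eq1, ← eq2]
    exact hc f
  have hz : ∑ j, ((f ⊗ₜ[ℂ] x j) - σ (x j ⊗ₜ[ℂ] f)) ⊗ₜ[ℂ] v j = 0 := by
    rw [Finset.sum_congr rfl (fun j _ => TensorProduct.sub_tmul _ _ _),
      Finset.sum_sub_distrib, heq, sub_self]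
  have := coords_zero_right v (fun j => (f ⊗ₜ[ℂ] x j) - σ (x j ⊗ₜ[ℂ] f)) hz i
  rw [sub_eq_zero] at this
  exact this.symm

/-- Abstract "peel off the top factor" core lemma. -/
theorem peel_core' [FiniteDimensional ℂ X] [FiniteDimensional ℂ X']
    (e : X →ₗ[ℂ] B) (e'' : X' →ₗ[ℂ] B) (σ : X' ⊗[ℂ] X →ₗ[ℂ] X ⊗[ℂ] X')
    (V'' : Submodule ℂ B) [FiniteDimensional ℂ ↥V'']
    (hstr : ∀ (y : X') (x : X),
      e'' y * e x = (LinearMap.mul' ℂ B ∘ₗ TensorProduct.map e e'') (σ (y ⊗ₜ[ℂ] x)))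
    (hcomm : ∀ (y : X') (m : B), m ∈ V'' → e'' y * m = m * e'' y)
    (hrk2 : Module.finrank ℂ ↥(V'' * (LinearMap.range e * LinearMap.range e''))
      = Module.finrank ℂ ↥V'' * (Module.finrank ℂ X * Module.finrank ℂ X'))
    (u : B) (hu : u ∈ V'' * LinearMap.range e)
    (hc : ∀ y : X', e'' y * u = u * e'' y) :
    ∃ (k : ℕ) (m : Fin k → ↥V'') (x : Fin k → X),
      (∀ i, ∀ y : X', σ (y ⊗ₜ[ℂ] x i) = x i ⊗ₜ[ℂ] y) ∧
      u = ∑ i, (m i : B) * e (x i) := by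
  classical
  let v := Module.finBasis ℂ ↥V''
  obtain ⟨x, hx⟩ := gen_expand_left e V'' v hu
  refine ⟨_, fun i => v i, x, ?_, hx⟩
  have hθrange : LinearMap.range (LinearMap.mul' ℂ B ∘ₗ TensorProduct.map e e'')
      = LinearMap.range e * LinearMap.range e'' := range_mulMap e e''
  have hθinj : Function.Injective (LinearMap.mul' ℂ B ∘ₗ
      TensorProduct.map V''.subtype
        (LinearMap.mul' ℂ B ∘ₗ TensorProduct.map e e'')) := by
    apply mulMap_injective
    rw [hθrange, Submodule.range_subtype, Module.finrank_tensorProduct, hrk2]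
  intro i y
  set θ := LinearMap.mul' ℂ B ∘ₗ
      TensorProduct.map V''.subtype (LinearMap.mul' ℂ B ∘ₗ TensorProduct.map e e'') with hθ
  have hθtmul : ∀ (mi : ↥V'') (w : X ⊗[ℂ] X'),
      θ (mi ⊗ₜ[ℂ] w) = (mi : B) * (LinearMap.mul' ℂ B ∘ₗ TensorProduct.map e e'') w := by
    intro mi w
    simp [hθ]
  have eq1 : e'' y * u = θ (∑ j, (v j : ↥V'') ⊗ₜ[ℂ] (σ (y ⊗ₜ[ℂ] x j))) := by
    rw [hx, Finset.mul_sum, map_sum]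
    refine Finset.sum_congr rfl fun j _ => ?_
    rw [hθtmul, ← hstr]
    rw [← mul_assoc, hcomm y (v j : B) (SetLike.coe_mem _), mul_assoc]
  have eq2 : u * e'' y = θ (∑ j, (v j : ↥V'') ⊗ₜ[ℂ] (x j ⊗ₜ[ℂ] y)) := by
    rw [hx, Finset.sum_mul, map_sum]
    refine Finset.sum_congr rfl fun j _ => ?_
    rw [hθtmul]
    simp only [LinearMap.coe_comp, Function.comp_apply, TensorProduct.map_tmul,
      LinearMap.mul'_apply]
    rw [mul_assoc]
  have heq : ∑ j, ((v j : ↥V'') ⊗ₜ[ℂ] (σ (y ⊗ₜ[ℂ] x j)) : ↥V'' ⊗[ℂ] (X ⊗[ℂ] X'))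
      = ∑ j, (v j : ↥V'') ⊗ₜ[ℂ] (x j ⊗ₜ[ℂ] y) := by
    apply hθinj
    rw [← eq1, ← eq2]
    exact hc y
  have hz : ∑ j, (v j : ↥V'') ⊗ₜ[ℂ] ((σ (y ⊗ₜ[ℂ] x j)) - (x j ⊗ₜ[ℂ] y)) = 0 := by
    have h5 := Finset.sum_sub_distrib (s := Finset.univ)
      (fun j => (v j : ↥V'') ⊗ₜ[ℂ] (σ (y ⊗ₜ[ℂ] x j))) (fun j => (v j : ↥V'') ⊗ₜ[ℂ] (x j ⊗ₜ[ℂ] y))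
    rw [heq, sub_self] at h5
    rw [Finset.sum_congr rfl (fun j _ => TensorProduct.tmul_sub _ _ _)]
    exact h5
  have := coords_zero_left v (fun j => (σ (y ⊗ₜ[ℂ] x j)) - (x j ⊗ₜ[ℂ] y)) hz i
  rwa [sub_eq_zero] at this

end Core

end XP12
namespace XP12

section Peel

set_option synthInstance.maxHeartbeats 1000000
set_option maxHeartbeats 1600000
set_option linter.unusedSectionVars false

open TensorProduct LinearMap

variable {H : Type*} [Ring H] [HopfAlgebra ℂ H] [FiniteDimensional ℂ H]
variable {B : Type*} [Ring B] [Algebra ℂ B]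
variable (eH : ℤ → H →ₗ[ℂ] B) (eK : ℤ → Module.Dual ℂ H →ₗ[ℂ] B)
variable (ht : IsAltTowerZ 0 eH eK)
include ht

theorem peel_bottom
    (hdim : ∀ lo hi : ℤ, lo ≤ hi →
      Module.finrank ℂ
          ↥(Algebra.adjoin ℂ (⋃ i ∈ Set.Icc lo hi, copyR 0 eH eK i))
        = Module.finrank ℂ H ^ (hi + 1 - lo).toNat)
    {lo hi : ℤ} {u : B} (hu : u ∈ W eH eK lo hi)
    (hc : ∀ a ∈ copyM eH eK (lo-1), a * u = u * a) : u ∈ W eH eK (lo+1) hi := by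
  rcases lt_or_ge hi lo with h | h
  · rw [W_empty eH eK h] at hu
    rw [W_empty eH eK (by omega)]
    exact hu
  haveI := fd_W eH eK ht hdim (lo+1) hi
  set d := Module.finrank ℂ H with hd
  have hVrk : Module.finrank ℂ ↥(W eH eK (lo+1) hi) = d ^ (hi + 1 - (lo+1)).toNat :=
    finrank_W eH eK ht hdim (lo+1) hi
  have hKrk : Module.finrank ℂ (Module.Dual ℂ H) = d := Subspace.dual_finrank_eq
  have harith : (hi + 1 - (lo - 1)).toNat = (hi + 1 - (lo+1)).toNat + 2 := by omega
  have hWm1 : Module.finrank ℂ ↥(W eH eK (lo-1) hi) = d ^ ((hi + 1 - (lo+1)).toNat + 2) := by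
    rw [finrank_W eH eK ht hdim (lo-1) hi, harith]
  rcases Int.emod_two_eq_zero_or_one lo with hpar | hpar
  · -- `lo` even : `eK lo` above `eH (lo-1)`
    have hstr : ∀ (x : Module.Dual ℂ H) (f : H),
        eK lo x * eH (lo-1) f
          = (LinearMap.mul' ℂ B ∘ₗ TensorProduct.map (eH (lo-1)) (eK lo))
              (σKH (x ⊗ₜ[ℂ] f)) := by
      intro x f
      have hs := LinearMap.congr_fun (ht.strH (lo-1) (by omega)) (x ⊗ₜ[ℂ] f)
      rw [show lo - 1 + 1 = lo by omega] at hs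
      simpa using hs
    have hcomm : ∀ (f : H) (m : B), m ∈ W eH eK (lo+1) hi →
        eH (lo-1) f * m = m * eH (lo-1) f := by
      intro f m hm
      refine W_commute eH eK ht hm (i := lo - 1) (Or.inl (by omega)) ?_
      rw [copyM_odd eH eK (by omega)]
      exact LinearMap.mem_range_self _ f
    have hrk2 : Module.finrank ℂ
        ↥(LinearMap.range (eH (lo-1)) * LinearMap.range (eK lo) * W eH eK (lo+1) hi)
        = Module.finrank ℂ H * Module.finrank ℂ (Module.Dual ℂ H)
          * Module.finrank ℂ ↥(W eH eK (lo+1) hi) := by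
      have hprod : LinearMap.range (eH (lo-1)) * LinearMap.range (eK lo)
          * W eH eK (lo+1) hi = W eH eK (lo-1) hi := by
        rw [mul_assoc, ← copyM_odd eH eK (show (lo-1) % 2 = 1 by omega),
          ← copyM_even eH eK hpar, ← W_cons eH eK h]
        have := W_cons eH eK (show lo - 1 ≤ hi by omega)
        rw [show lo - 1 + 1 = lo by omega] at this
        exact this.symm
      rw [hprod, hWm1, hVrk, hKrk, ← hd]
      ring
    have hu' : u ∈ LinearMap.range (eK lo) * W eH eK (lo+1) hi := by
      rw [← copyM_even eH eK hpar, ← W_cons eH eK h]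
      exact hu
    obtain ⟨k, x, m, hfix, hxu⟩ := peel_core (eK lo) (eH (lo-1)) σKH (W eH eK (lo+1) hi)
      hstr hcomm hrk2 u hu' (fun f => by
        refine hc (eH (lo-1) f) ?_
        rw [copyM_odd eH eK (show (lo-1) % 2 = 1 by omega)]
        exact LinearMap.mem_range_self _ f)
    rw [hxu]
    refine Submodule.sum_mem _ fun i _ => ?_
    rw [scalar_of_σKH_fix (x i) (hfix i), map_smul, ht.oneK lo (by omega),
      smul_mul_assoc, one_mul]
    exact Submodule.smul_mem _ _ (SetLike.coe_mem (m i))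
  · -- `lo` odd : `eH lo` above `eK (lo-1)`
    have hstr : ∀ (x : H) (f : Module.Dual ℂ H),
        eH lo x * eK (lo-1) f
          = (LinearMap.mul' ℂ B ∘ₗ TensorProduct.map (eK (lo-1)) (eH lo))
              (σHK (x ⊗ₜ[ℂ] f)) := by
      intro x f
      have hs := LinearMap.congr_fun (ht.strK (lo-1) (by omega)) (x ⊗ₜ[ℂ] f)
      rw [show lo - 1 + 1 = lo by omega] at hs
      simpa using hs
    have hcomm : ∀ (f : Module.Dual ℂ H) (m : B), m ∈ W eH eK (lo+1) hi →
        eK (lo-1) f * m = m * eK (lo-1) f := by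
      intro f m hm
      refine W_commute eH eK ht hm (i := lo - 1) (Or.inl (by omega)) ?_
      rw [copyM_even eH eK (by omega)]
      exact LinearMap.mem_range_self _ f
    have hrk2 : Module.finrank ℂ
        ↥(LinearMap.range (eK (lo-1)) * LinearMap.range (eH lo) * W eH eK (lo+1) hi)
        = Module.finrank ℂ (Module.Dual ℂ H) * Module.finrank ℂ H
          * Module.finrank ℂ ↥(W eH eK (lo+1) hi) := by
      have hprod : LinearMap.range (eK (lo-1)) * LinearMap.range (eH lo)
          * W eH eK (lo+1) hi = W eH eK (lo-1) hi := by
        rw [mul_assoc, ← copyM_even eH eK (show (lo-1) % 2 = 0 by omega),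
          ← copyM_odd eH eK hpar, ← W_cons eH eK h]
        have := W_cons eH eK (show lo - 1 ≤ hi by omega)
        rw [show lo - 1 + 1 = lo by omega] at this
        exact this.symm
      rw [hprod, hWm1, hVrk, hKrk, ← hd]
      ring
    have hu' : u ∈ LinearMap.range (eH lo) * W eH eK (lo+1) hi := by
      rw [← copyM_odd eH eK hpar, ← W_cons eH eK h]
      exact hu
    obtain ⟨k, x, m, hfix, hxu⟩ := peel_core (eH lo) (eK (lo-1)) σHK (W eH eK (lo+1) hi)
      hstr hcomm hrk2 u hu' (fun f => by
        refine hc (eK (lo-1) f) ?_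
        rw [copyM_even eH eK (show (lo-1) % 2 = 0 by omega)]
        exact LinearMap.mem_range_self _ f)
    rw [hxu]
    refine Submodule.sum_mem _ fun i _ => ?_
    rw [scalar_of_σHK_fix (x i) (hfix i), map_smul, ht.oneH lo (by omega),
      smul_mul_assoc, one_mul]
    exact Submodule.smul_mem _ _ (SetLike.coe_mem (m i))

theorem peel_top
    (hdim : ∀ lo hi : ℤ, lo ≤ hi →
      Module.finrank ℂ
          ↥(Algebra.adjoin ℂ (⋃ i ∈ Set.Icc lo hi, copyR 0 eH eK i))
        = Module.finrank ℂ H ^ (hi + 1 - lo).toNat)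
    {lo hi : ℤ} {u : B} (hu : u ∈ W eH eK lo hi)
    (hc : ∀ a ∈ copyM eH eK (hi+1), a * u = u * a) : u ∈ W eH eK lo (hi-1) := by
  rcases lt_or_ge hi lo with h | h
  · rw [W_empty eH eK h] at hu
    rw [W_empty eH eK (by omega)]
    exact hu
  haveI := fd_W eH eK ht hdim lo (hi-1)
  set d := Module.finrank ℂ H with hd
  have hVrk : Module.finrank ℂ ↥(W eH eK lo (hi-1)) = d ^ (hi - 1 + 1 - lo).toNat :=
    finrank_W eH eK ht hdim lo (hi-1)
  have hKrk : Module.finrank ℂ (Module.Dual ℂ H) = d := Subspace.dual_finrank_eq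
  have harith : (hi + 1 + 1 - lo).toNat = (hi - 1 + 1 - lo).toNat + 2 := by omega
  have hWp1 : Module.finrank ℂ ↥(W eH eK lo (hi+1)) = d ^ ((hi - 1 + 1 - lo).toNat + 2) := by
    rw [finrank_W eH eK ht hdim lo (hi+1), ← harith]
  have hsplit : W eH eK lo hi = W eH eK lo (hi-1) * copyM eH eK hi := by
    rw [W_split eH eK lo hi hi h (by omega), W_single eH eK hi]
  have hsplit2 : W eH eK lo (hi+1) = W eH eK lo (hi-1) * (copyM eH eK hi * copyM eH eK (hi+1)) := by
    rw [W_split eH eK lo hi (hi+1) h (by omega)]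
    congr 1
    rw [W_cons eH eK (show hi ≤ hi + 1 by omega), W_single eH eK (hi+1)]
  rcases Int.emod_two_eq_zero_or_one hi with hpar | hpar
  · -- `hi` even : `eK hi` below `eH (hi+1)`
    have hstr : ∀ (y : H) (x : Module.Dual ℂ H),
        eH (hi+1) y * eK hi x
          = (LinearMap.mul' ℂ B ∘ₗ TensorProduct.map (eK hi) (eH (hi+1)))
              (σHK (y ⊗ₜ[ℂ] x)) := by
      intro y x
      have hs := LinearMap.congr_fun (ht.strK hi (by omega)) (y ⊗ₜ[ℂ] x)
      simpa using hs
    have hcomm : ∀ (y : H) (m : B), m ∈ W eH eK lo (hi-1) →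
        eH (hi+1) y * m = m * eH (hi+1) y := by
      intro y m hm
      refine W_commute eH eK ht hm (i := hi + 1) (Or.inr (by omega)) ?_
      rw [copyM_odd eH eK (by omega)]
      exact LinearMap.mem_range_self _ y
    have hrk2 : Module.finrank ℂ
        ↥(W eH eK lo (hi-1) * (LinearMap.range (eK hi) * LinearMap.range (eH (hi+1))))
        = Module.finrank ℂ ↥(W eH eK lo (hi-1))
          * (Module.finrank ℂ (Module.Dual ℂ H) * Module.finrank ℂ H) := by
      have hprod : W eH eK lo (hi-1) * (LinearMap.range (eK hi) * LinearMap.range (eH (hi+1)))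
          = W eH eK lo (hi+1) := by
        rw [← copyM_even eH eK hpar, ← copyM_odd eH eK (show (hi+1) % 2 = 1 by omega), hsplit2]
      rw [hprod, hWp1, hVrk, hKrk, ← hd]
      ring
    have hu' : u ∈ W eH eK lo (hi-1) * LinearMap.range (eK hi) := by
      rw [← copyM_even eH eK hpar, ← hsplit]
      exact hu
    obtain ⟨k, m, x, hfix, hxu⟩ := peel_core' (eK hi) (eH (hi+1)) σHK (W eH eK lo (hi-1))
      hstr hcomm hrk2 u hu' (fun y => by
        refine hc (eH (hi+1) y) ?_
        rw [copyM_odd eH eK (show (hi+1) % 2 = 1 by omega)]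
        exact LinearMap.mem_range_self _ y)
    rw [hxu]
    refine Submodule.sum_mem _ fun i _ => ?_
    rw [scalar_of_σHK_fix' (x i) (hfix i), map_smul, ht.oneK hi (by omega),
      mul_smul_comm, mul_one]
    exact Submodule.smul_mem _ _ (SetLike.coe_mem (m i))
  · -- `hi` odd : `eH hi` below `eK (hi+1)`
    have hstr : ∀ (y : Module.Dual ℂ H) (x : H),
        eK (hi+1) y * eH hi x
          = (LinearMap.mul' ℂ B ∘ₗ TensorProduct.map (eH hi) (eK (hi+1)))
              (σKH (y ⊗ₜ[ℂ] x)) := by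
      intro y x
      have hs := LinearMap.congr_fun (ht.strH hi (by omega)) (y ⊗ₜ[ℂ] x)
      simpa using hs
    have hcomm : ∀ (y : Module.Dual ℂ H) (m : B), m ∈ W eH eK lo (hi-1) →
        eK (hi+1) y * m = m * eK (hi+1) y := by
      intro y m hm
      refine W_commute eH eK ht hm (i := hi + 1) (Or.inr (by omega)) ?_
      rw [copyM_even eH eK (by omega)]
      exact LinearMap.mem_range_self _ y
    have hrk2 : Module.finrank ℂ
        ↥(W eH eK lo (hi-1) * (LinearMap.range (eH hi) * LinearMap.range (eK (hi+1))))
        = Module.finrank ℂ ↥(W eH eK lo (hi-1))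
          * (Module.finrank ℂ H * Module.finrank ℂ (Module.Dual ℂ H)) := by
      have hprod : W eH eK lo (hi-1) * (LinearMap.range (eH hi) * LinearMap.range (eK (hi+1)))
          = W eH eK lo (hi+1) := by
        rw [← copyM_odd eH eK hpar, ← copyM_even eH eK (show (hi+1) % 2 = 0 by omega), hsplit2]
      rw [hprod, hWp1, hVrk, hKrk, ← hd]
      ring
    have hu' : u ∈ W eH eK lo (hi-1) * LinearMap.range (eH hi) := by
      rw [← copyM_odd eH eK hpar, ← hsplit]
      exact hu
    obtain ⟨k, m, x, hfix, hxu⟩ := peel_core' (eH hi) (eK (hi+1)) σKH (W eH eK lo (hi-1))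
      hstr hcomm hrk2 u hu' (fun y => by
        refine hc (eK (hi+1) y) ?_
        rw [copyM_even eH eK (show (hi+1) % 2 = 0 by omega)]
        exact LinearMap.mem_range_self _ y)
    rw [hxu]
    refine Submodule.sum_mem _ fun i _ => ?_
    rw [scalar_of_σKH_fix' (x i) (hfix i), map_smul, ht.oneH hi (by omega),
      mul_smul_comm, mul_one]
    exact Submodule.smul_mem _ _ (SetLike.coe_mem (m i))

theorem key_bottom
    (hdim : ∀ lo hi : ℤ, lo ≤ hi →
      Module.finrank ℂ
          ↥(Algebra.adjoin ℂ (⋃ i ∈ Set.Icc lo hi, copyR 0 eH eK i))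
        = Module.finrank ℂ H ^ (hi + 1 - lo).toNat)
    {lo hi : ℤ} {u : B} (hu : u ∈ W eH eK lo hi)
    (hc : ∀ i, i ≤ hi - 1 → ∀ a ∈ copyM eH eK i, a * u = u * a) :
    u ∈ (1 : Submodule ℂ B) := by
  have key : ∀ (n : ℕ) (lo : ℤ), (hi + 1 - lo).toNat = n → u ∈ W eH eK lo hi →
      u ∈ (1 : Submodule ℂ B) := by
    intro n
    induction n with
    | zero =>
        intro lo hn hu
        rwa [W_empty eH eK (by omega)] at hu
    | succ n ih =>
        intro lo hn hu
        have h1 : lo ≤ hi := by omega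
        have := peel_bottom eH eK ht hdim hu (hc (lo-1) (by omega))
        exact ih (lo+1) (by omega) this
  exact key _ lo rfl hu

theorem key_top
    (hdim : ∀ lo hi : ℤ, lo ≤ hi →
      Module.finrank ℂ
          ↥(Algebra.adjoin ℂ (⋃ i ∈ Set.Icc lo hi, copyR 0 eH eK i))
        = Module.finrank ℂ H ^ (hi + 1 - lo).toNat)
    {lo hi : ℤ} {u : B} (hu : u ∈ W eH eK lo hi)
    (hc : ∀ i, lo + 1 ≤ i → ∀ a ∈ copyM eH eK i, a * u = u * a) :
    u ∈ (1 : Submodule ℂ B) := by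
  have key : ∀ (n : ℕ) (hi : ℤ), (hi + 1 - lo).toNat = n → u ∈ W eH eK lo hi →
      u ∈ (1 : Submodule ℂ B) := by
    intro n
    induction n with
    | zero =>
        intro hi hn hu
        rwa [W_empty eH eK (by omega)] at hu
    | succ n ih =>
        intro hi hn hu
        have h1 : lo ≤ hi := by omega
        have := peel_top eH eK ht hdim hu (hc (hi+1) (by omega))
        exact ih (hi-1) (by omega) this
  exact key _ hi rfl hu

end Peel

end XP12
namespace XP12

section Extra

set_option synthInstance.maxHeartbeats 1000000
set_option maxHeartbeats 1600000
set_option linter.unusedSectionVars false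

open TensorProduct LinearMap

variable {H : Type*} [Ring H] [HopfAlgebra ℂ H] [FiniteDimensional ℂ H]
variable {B : Type*} [Ring B] [Algebra ℂ B]
variable (eH : ℤ → H →ₗ[ℂ] B) (eK : ℤ → Module.Dual ℂ H →ₗ[ℂ] B)
variable (ht : IsAltTowerZ 0 eH eK)
include ht

theorem copyM_mul_W_up {lo i hi : ℤ} (h : hi < i) :
    copyM eH eK i * W eH eK lo hi ≤ W eH eK lo hi * copyM eH eK i := by
  have key : ∀ (n : ℕ) (lo : ℤ), (hi + 1 - lo).toNat = n →
      copyM eH eK i * W eH eK lo hi ≤ W eH eK lo hi * copyM eH eK i := by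
    intro n
    induction n with
    | zero =>
        intro lo hn
        rw [W_empty eH eK (by omega), Submodule.one_mul, Submodule.mul_one]
    | succ n ih =>
        intro lo hn
        have h1 : lo ≤ hi := by omega
        rw [W_cons eH eK h1, ← mul_assoc]
        refine le_trans (mul_le_mul' (swap_le eH eK ht (by omega)) le_rfl) ?_
        rw [mul_assoc]
        refine le_trans (mul_le_mul' le_rfl (ih (lo+1) (by omega))) ?_
        exact le_of_eq (mul_assoc _ _ _).symm
  exact key _ lo rfl

theorem copyM_mul_W_le'' {lo i hi : ℤ} (h1 : lo ≤ i) :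
    copyM eH eK i * W eH eK lo hi ≤ W eH eK lo (max i hi) := by
  rcases le_or_gt i hi with h | h
  · rw [max_eq_right h]
    exact copyM_mul_W_le eH eK ht h1 h
  · rw [max_eq_left h.le]
    refine le_trans (copyM_mul_W_up eH eK ht h) ?_
    refine le_trans (mul_le_mul' (W_mono_hi eH eK ht (show hi ≤ i - 1 by omega))
      le_rfl) ?_
    exact le_of_eq (by rw [W_split eH eK lo i i (by omega) (by omega), W_single])

theorem W_mul_copyM_le'' {lo i hi : ℤ} (h1 : lo ≤ i) :
    W eH eK lo hi * copyM eH eK i ≤ W eH eK lo (max i hi) := by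
  rcases le_or_gt i hi with h | h
  · rw [max_eq_right h]
    exact W_mul_copyM_le eH eK ht h1 h
  · rw [max_eq_left h.le]
    refine le_trans (mul_le_mul' (W_mono_hi eH eK ht (show hi ≤ i - 1 by omega))
      le_rfl) ?_
    exact le_of_eq (by rw [W_split eH eK lo i i (by omega) (by omega), W_single])

theorem W_le_adjoin_set {lo hi : ℤ} (s : Set B)
    (hs : ∀ i, lo ≤ i → i ≤ hi → copyR 0 eH eK i ⊆ s) :
    W eH eK lo hi ≤ Subalgebra.toSubmodule (Algebra.adjoin ℂ s) := by
  have key : ∀ (n : ℕ) (lo' : ℤ), lo ≤ lo' → lo' + n ≤ hi + 1 →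
      Wn eH eK lo' n ≤ Subalgebra.toSubmodule (Algebra.adjoin ℂ s) := by
    intro n
    induction n with
    | zero =>
        intro lo' _ _
        show (1 : Submodule ℂ B) ≤ _
        rw [Submodule.one_le, Subalgebra.mem_toSubmodule]
        exact Subalgebra.one_mem _
    | succ n ih =>
        intro lo' hl hr
        show copyM eH eK lo' * Wn eH eK (lo'+1) n ≤ _
        rw [Submodule.mul_le]
        intro x hx m hm
        rw [Subalgebra.mem_toSubmodule]
        have hx' : x ∈ Algebra.adjoin ℂ s :=
          Algebra.subset_adjoin (hs lo' hl (by omega) (mem_copyR_of eH eK hx))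
        have hm' := ih (lo'+1) (by omega) (by omega) hm
        rw [Subalgebra.mem_toSubmodule] at hm'
        exact mul_mem hx' hm'
  rcases lt_or_ge hi lo with hord | hord
  · rw [W_empty eH eK hord, Submodule.one_le, Subalgebra.mem_toSubmodule]
    exact Subalgebra.one_mem _
  · have h0 : (hi + 1 - lo).toNat = (hi + 1 - lo).toNat := rfl
    exact key _ lo le_rfl (by omega)

end Extra

section CommAdj

variable {B : Type*} [Ring B] [Algebra ℂ B]

theorem adjoin_adjoin_comm (s t : Set B)
    (hcomm : ∀ a ∈ s, ∀ b ∈ t, a * b = b * a) :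
    ∀ x ∈ Algebra.adjoin ℂ s, ∀ y ∈ Algebra.adjoin ℂ t, x * y = y * x := by
  intro x hx y hy
  have h1 : ∀ b ∈ t, b * x = x * b := by
    intro b hb
    have hsub : s ⊆ (Subalgebra.centralizer ℂ {b} : Set B) := by
      intro a ha
      rw [SetLike.mem_coe, Subalgebra.mem_centralizer_iff]
      intro g hg
      rw [Set.mem_singleton_iff] at hg
      rw [hg]
      exact (hcomm a ha b hb).symm
    have := Algebra.adjoin_le hsub hx
    rw [Subalgebra.mem_centralizer_iff] at this
    exact this b rfl
  have h2 : t ⊆ (Subalgebra.centralizer ℂ {x} : Set B) := by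
    intro b hb
    rw [SetLike.mem_coe, Subalgebra.mem_centralizer_iff]
    intro g hg
    rw [Set.mem_singleton_iff] at hg
    rw [hg]
    exact (h1 b hb).symm
  have := Algebra.adjoin_le h2 hy
  rw [Subalgebra.mem_centralizer_iff] at this
  exact this x rfl

end CommAdj

end XP12
namespace XP12

section Main

set_option synthInstance.maxHeartbeats 1000000
set_option maxHeartbeats 1600000
set_option linter.unusedSectionVars false

open TensorProduct LinearMap

variable {H : Type*} [Ring H] [HopfAlgebra ℂ H] [FiniteDimensional ℂ H]
variable {B : Type*} [Ring B] [Algebra ℂ B]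
variable (eH : ℤ → H →ₗ[ℂ] B) (eK : ℤ → Module.Dual ℂ H →ₗ[ℂ] B)
variable (ht : IsAltTowerZ 0 eH eK)
include ht

theorem main_dir1
    (hdim : ∀ lo hi : ℤ, lo ≤ hi →
      Module.finrank ℂ
          ↥(Algebra.adjoin ℂ (⋃ i ∈ Set.Icc lo hi, copyR 0 eH eK i))
        = Module.finrank ℂ H ^ (hi + 1 - lo).toNat)
    (p : ℤ) {b : B}
    (hb : ∀ i, i ≤ p → ∀ a ∈ copyM eH eK i, a * b = b * a) :
    b ∈ Algebra.adjoin ℂ (⋃ i ∈ Set.Ici (p + 2), copyR 0 eH eK i) := by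
  classical
  obtain ⟨lo, hi, hlo, hhi, hbW⟩ := exists_W eH eK ht p b
  haveI := fd_W eH eK ht hdim lo (p+1)
  haveI := fd_W eH eK ht hdim (p+2) hi
  have hbUV : b ∈ W eH eK lo (p+1) * W eH eK (p+2) hi := by
    have h := W_split eH eK lo (p+2) hi (by omega) (by omega)
    rw [show p + 2 - 1 = p + 1 by omega] at h
    rw [← h]
    exact hbW
  set v := Module.finBasis ℂ ↥(W eH eK (p+2) hi) with hv
  obtain ⟨u, hu⟩ := gen_expand_right (W eH eK lo (p+1)).subtype (W eH eK (p+2) hi) v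
    (by rwa [Submodule.range_subtype])
  have hcomm_all : ∀ i, i ≤ p → ∀ a ∈ copyM eH eK i, ∀ j,
      a * ((u j : B)) = ((u j : B)) * a := by
    intro i hip a ha
    haveI := fd_W eH eK ht hdim (min i lo) (p+1)
    have hainj : Function.Injective
        (LinearMap.mul' ℂ B ∘ₗ TensorProduct.map (W eH eK (min i lo) (p+1)).subtype
          (W eH eK (p+2) hi).subtype) := by
      apply mulMap_injective
      rw [Submodule.range_subtype, Submodule.range_subtype]
      have hprod : W eH eK (min i lo) (p+1) * W eH eK (p+2) hi
          = W eH eK (min i lo) hi := by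
        have h := W_split eH eK (min i lo) (p+2) hi (by omega) (by omega)
        rw [show p + 2 - 1 = p + 1 by omega] at h
        rw [← h]
      rw [hprod, finrank_W eH eK ht hdim, finrank_W eH eK ht hdim,
        finrank_W eH eK ht hdim, ← pow_add]
      congr 1
      omega
    have hmem : ∀ j, a * ((u j : B)) - ((u j : B)) * a ∈ W eH eK (min i lo) (p+1) := by
      intro j
      have h1 : a * ((u j : B)) ∈ W eH eK (min i lo) (p+1) :=
        copyM_mul_W_le' eH eK ht (show i ≤ p + 1 by omega)
          (Submodule.mul_mem_mul ha (SetLike.coe_mem (u j)))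
      have h2 : ((u j : B)) * a ∈ W eH eK (min i lo) (p+1) :=
        W_mul_copyM_le' eH eK ht (show i ≤ p + 1 by omega)
          (Submodule.mul_mem_mul (SetLike.coe_mem (u j)) ha)
      exact sub_mem h1 h2
    have hzero : ∑ j, (W eH eK (min i lo) (p+1)).subtype ⟨_, hmem j⟩ * ((v j : B)) = 0 := by
      have hab : a * b = b * a := hb i hip a ha
      have hvb : ∀ j, a * ((v j : B)) = ((v j : B)) * a := fun j =>
        W_commute eH eK ht (SetLike.coe_mem (v j)) (i := i) (Or.inl (by omega)) ha
      have hterm : ∀ j, (W eH eK (min i lo) (p+1)).subtype ⟨_, hmem j⟩ * ((v j : B))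
          = a * ((u j : B) * (v j : B)) - ((u j : B) * (v j : B)) * a := by
        intro j
        show (a * ((u j : B)) - ((u j : B)) * a) * ((v j : B)) = _
        rw [sub_mul, mul_assoc, mul_assoc ((u j : B)) a ((v j : B)), hvb j,
          ← mul_assoc ((u j : B)) ((v j : B)) a]
      rw [Finset.sum_congr rfl fun j _ => hterm j, Finset.sum_sub_distrib,
        ← Finset.mul_sum, ← Finset.sum_mul]
      have hu' : ∑ j, (u j : B) * ((v j : B)) = b := by
        rw [hu]
        rfl
      rw [hu', hab, sub_self]
    have hz := gen_unique_right (W eH eK (min i lo) (p+1)).subtype (W eH eK (p+2) hi) v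
      hainj _ hzero
    intro j
    have := hz j
    rw [Submodule.mk_eq_zero] at this
    rw [sub_eq_zero] at this
    exact this
  have hkey : ∀ j, ((u j : B)) ∈ (1 : Submodule ℂ B) := by
    intro j
    refine key_bottom eH eK ht hdim (SetLike.coe_mem (u j)) ?_
    intro i hi' a ha
    exact hcomm_all i (by omega) a ha j
  choose c hc using fun j => Submodule.mem_one.mp (hkey j)
  rw [← Subalgebra.mem_toSubmodule, hu]
  refine Submodule.sum_mem _ fun j _ => ?_
  have hsm : (W eH eK lo (p+1)).subtype (u j) * ((v j : B)) = (c j) • ((v j : B)) := by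
    show ((u j : B)) * ((v j : B)) = _
    rw [← hc j, ← Algebra.smul_def]
  rw [hsm]
  refine Submodule.smul_mem _ _ ?_
  refine W_le_adjoin_set eH eK ht (lo := p+2) (hi := hi) _ ?_ (SetLike.coe_mem (v j))
  intro i h1 _ x hx
  exact Set.mem_biUnion (show i ∈ Set.Ici (p+2) from h1) hx

theorem main_dir2
    (hdim : ∀ lo hi : ℤ, lo ≤ hi →
      Module.finrank ℂ
          ↥(Algebra.adjoin ℂ (⋃ i ∈ Set.Icc lo hi, copyR 0 eH eK i))
        = Module.finrank ℂ H ^ (hi + 1 - lo).toNat)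
    (p : ℤ) {b : B}
    (hb : ∀ i, p + 2 ≤ i → ∀ a ∈ copyM eH eK i, a * b = b * a) :
    b ∈ Algebra.adjoin ℂ (⋃ i ∈ Set.Iic p, copyR 0 eH eK i) := by
  classical
  obtain ⟨lo, hi, hlo, hhi, hbW⟩ := exists_W eH eK ht p b
  haveI := fd_W eH eK ht hdim lo p
  haveI := fd_W eH eK ht hdim (p+1) hi
  have hbUV : b ∈ W eH eK lo p * W eH eK (p+1) hi := by
    have h := W_split eH eK lo (p+1) hi (by omega) (by omega)
    rw [show p + 1 - 1 = p by omega] at h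
    rw [← h]
    exact hbW
  set vU := Module.finBasis ℂ ↥(W eH eK lo p) with hvU
  obtain ⟨x, hx⟩ := gen_expand_left (W eH eK (p+1) hi).subtype (W eH eK lo p) vU
    (by rwa [Submodule.range_subtype])
  have hcomm_all : ∀ i, p + 2 ≤ i → ∀ a ∈ copyM eH eK i, ∀ j,
      a * ((x j : B)) = ((x j : B)) * a := by
    intro i hip a ha
    haveI := fd_W eH eK ht hdim (p+1) (max i hi)
    have hainj : Function.Injective
        (LinearMap.mul' ℂ B ∘ₗ TensorProduct.map (W eH eK lo p).subtype
          (W eH eK (p+1) (max i hi)).subtype) := by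
      apply mulMap_injective
      rw [Submodule.range_subtype, Submodule.range_subtype]
      have hprod : W eH eK lo p * W eH eK (p+1) (max i hi)
          = W eH eK lo (max i hi) := by
        have h := W_split eH eK lo (p+1) (max i hi) (by omega) (by omega)
        rw [show p + 1 - 1 = p by omega] at h
        rw [← h]
      rw [hprod, finrank_W eH eK ht hdim, finrank_W eH eK ht hdim,
        finrank_W eH eK ht hdim, ← pow_add]
      congr 1
      omega
    have hmem : ∀ j, a * ((x j : B)) - ((x j : B)) * a ∈ W eH eK (p+1) (max i hi) := by
      intro j
      have h1 : a * ((x j : B)) ∈ W eH eK (p+1) (max i hi) :=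
        copyM_mul_W_le'' eH eK ht (show p + 1 ≤ i by omega)
          (Submodule.mul_mem_mul ha (SetLike.coe_mem (x j)))
      have h2 : ((x j : B)) * a ∈ W eH eK (p+1) (max i hi) :=
        W_mul_copyM_le'' eH eK ht (show p + 1 ≤ i by omega)
          (Submodule.mul_mem_mul (SetLike.coe_mem (x j)) ha)
      exact sub_mem h1 h2
    have hzero : ∑ j, ((vU j : B)) * (W eH eK (p+1) (max i hi)).subtype ⟨_, hmem j⟩ = 0 := by
      have hab : a * b = b * a := hb i hip a ha
      have hub : ∀ j, a * ((vU j : B)) = ((vU j : B)) * a := fun j =>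
        W_commute eH eK ht (SetLike.coe_mem (vU j)) (i := i) (Or.inr (by omega)) ha
      have hterm : ∀ j, ((vU j : B)) * (W eH eK (p+1) (max i hi)).subtype ⟨_, hmem j⟩
          = a * ((vU j : B) * (x j : B)) - ((vU j : B) * (x j : B)) * a := by
        intro j
        show ((vU j : B)) * (a * ((x j : B)) - ((x j : B)) * a) = _
        rw [mul_sub, ← mul_assoc ((vU j : B)) a ((x j : B)), ← hub j,
          ← mul_assoc, mul_assoc ((vU j : B)) ((x j : B)) a,
          mul_assoc a ((vU j : B)) ((x j : B))]
      rw [Finset.sum_congr rfl fun j _ => hterm j, Finset.sum_sub_distrib,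
        ← Finset.mul_sum, ← Finset.sum_mul]
      have hx' : ∑ j, (vU j : B) * ((x j : B)) = b := by
        rw [hx]
        rfl
      rw [hx', hab, sub_self]
    have hz := gen_unique_left (W eH eK (p+1) (max i hi)).subtype (W eH eK lo p) vU
      hainj _ hzero
    intro j
    have := hz j
    rw [Submodule.mk_eq_zero] at this
    rw [sub_eq_zero] at this
    exact this
  have hkey : ∀ j, ((x j : B)) ∈ (1 : Submodule ℂ B) := by
    intro j
    have hxmem : ((x j : B)) ∈ W eH eK (p+1) hi := SetLike.coe_mem (x j)
    refine key_top eH eK ht hdim hxmem ?_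
    intro i hi' a ha
    exact hcomm_all i (by omega) a ha j
  choose c hc using fun j => Submodule.mem_one.mp (hkey j)
  rw [← Subalgebra.mem_toSubmodule, hx]
  refine Submodule.sum_mem _ fun j _ => ?_
  have hsm : ((vU j : B)) * (W eH eK (p+1) hi).subtype (x j) = (c j) • ((vU j : B)) := by
    show ((vU j : B)) * ((x j : B)) = _
    rw [← hc j, ← Algebra.commutes, ← Algebra.smul_def]
  rw [hsm]
  refine Submodule.smul_mem _ _ ?_
  refine W_le_adjoin_set eH eK ht (lo := lo) (hi := p) _ ?_ (SetLike.coe_mem (vU j))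
  intro i _ h2 y hy
  exact Set.mem_biUnion (show i ∈ Set.Iic p from h2) hy

end Main

end XP12
theorem infinite_crossed_product_mutual_commutants
    [FiniteDimensional ℂ H]
    (eH : ℤ → H →ₗ[ℂ] B) (eK : ℤ → Module.Dual ℂ H →ₗ[ℂ] B)
    -- B is the infinite iterated crossed product (H at odd positions, H* at even positions):
    (ht : IsAltTowerZ 0 eH eK)
    -- each finite interval generates a subalgebra of the correct dimension:
    (hdim : ∀ lo hi : ℤ, lo ≤ hi →
      Module.finrank ℂ
          ↥(Algebra.adjoin ℂ (⋃ i ∈ Set.Icc lo hi, copyR 0 eH eK i))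
        = Module.finrank ℂ H ^ (hi + 1 - lo).toNat)
    (p : ℤ) :
    -- H_{(−∞,p]} and H_{[p+2,∞)} are mutual commutants in H_{(−∞,∞)}:
    Subalgebra.centralizer ℂ
        ((Algebra.adjoin ℂ (⋃ i ∈ Set.Iic p, copyR 0 eH eK i) : Subalgebra ℂ B) : Set B)
      = Algebra.adjoin ℂ (⋃ i ∈ Set.Ici (p + 2), copyR 0 eH eK i) ∧
    Subalgebra.centralizer ℂ
        ((Algebra.adjoin ℂ (⋃ i ∈ Set.Ici (p + 2), copyR 0 eH eK i) : Subalgebra ℂ B) : Set B)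
      = Algebra.adjoin ℂ (⋃ i ∈ Set.Iic p, copyR 0 eH eK i) := by

  classical
  have hcomm : ∀ a ∈ (⋃ i ∈ Set.Iic p, copyR 0 eH eK i),
      ∀ c ∈ (⋃ i ∈ Set.Ici (p + 2), copyR 0 eH eK i), a * c = c * a := by
    intro a ha c hc
    obtain ⟨i, hi1, hai⟩ := Set.mem_iUnion₂.mp ha
    obtain ⟨j, hj1, hcj⟩ := Set.mem_iUnion₂.mp hc
    rw [Set.mem_Iic] at hi1
    rw [Set.mem_Ici] at hj1
    exact ht.commute i j (by omega) a hai c hcj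
  constructor
  · apply le_antisymm
    · intro b hb
      rw [Subalgebra.mem_centralizer_iff] at hb
      refine XP12.main_dir1 eH eK ht hdim p ?_
      intro i hip a ha
      refine hb a ?_
      exact Algebra.subset_adjoin
        (Set.mem_biUnion (Set.mem_Iic.mpr hip) (XP12.mem_copyR_of eH eK ha))
    · intro b hb
      rw [Subalgebra.mem_centralizer_iff]
      intro g hg
      exact XP12.adjoin_adjoin_comm _ _ hcomm g hg b hb
  · apply le_antisymm
    · intro b hb
      rw [Subalgebra.mem_centralizer_iff] at hb
      refine XP12.main_dir2 eH eK ht hdim p ?_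
      intro i hip a ha
      refine hb a ?_
      exact Algebra.subset_adjoin
        (Set.mem_biUnion (Set.mem_Ici.mpr hip) (XP12.mem_copyR_of eH eK ha))
    · intro b hb
      rw [Subalgebra.mem_centralizer_iff]
      intro g hg
      exact (XP12.adjoin_adjoin_comm _ _ hcomm b hb g hg).symm

end
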